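/- arXiv:2009.03153 — 4 statements merged into one kernel-verified Lean document; each statement's English description precedes it below -/
import Mathlib

section
/- Let q ≥ 2 be an integer and Ψ(λ) = (q+1)√(4q − λ²)/(2((q+1)² − λ²)) on [−2√q, 2√q]. Then for every t > 0: if q ≥ 6, |∫_{−2√q}^{2√q} e^{itλ} Ψ(λ) dλ| ≤ (2√q/(q+1)) · (1/t); and if 2 ≤ q ≤ 5, |∫_{−2√q}^{2√q} e^{itλ} Ψ(λ) dλ| ≤ ((q+1)/(q−1) − 2√q/(q+1)) · (1/t). -/
open MeasureTheory intervalIntegral Real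

/-- `Ψ(λ) = (q+1)√(4q − λ²) / (2((q+1)² − λ²))`. -/
noncomputable def Psi (q : ℕ) (l : ℝ) : ℝ :=
  ((q:ℝ)+1) * Real.sqrt (4*q - l^2) / (2*(((q:ℝ)+1)^2 - l^2))

/-- the derivative of Psi (junk value where sqrt vanishes) -/
noncomputable def PsiD (q : ℕ) (l : ℝ) : ℝ :=
  ((q:ℝ)+1) * l * ((6*q - q^2 - 1) - l^2) /
    (2 * Real.sqrt (4*q - l^2) * ((((q:ℝ)+1)^2 - l^2))^2)

section basic
variable {q : ℕ}

lemma hq1 (hq : 2 ≤ q) : (2:ℝ) ≤ (q:ℝ) := by exact_mod_cast hq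

lemma hD_pos (hq : 2 ≤ q) {l : ℝ} (hl : l^2 ≤ 4*q) : 0 < ((q:ℝ)+1)^2 - l^2 := by
  have := hq1 hq; nlinarith

lemma psi_hasDeriv (hq : 2 ≤ q) {l : ℝ} (hl : l^2 < 4*q) :
    HasDerivAt (Psi q) (PsiD q l) l := by
  have hq' := hq1 hq
  have hs : 0 < 4*q - l^2 := by linarith
  have hss : Real.sqrt (4*q - l^2) ^ 2 = 4*q - l^2 := Real.sq_sqrt hs.le
  have hsp : 0 < Real.sqrt (4*q - l^2) := Real.sqrt_pos.2 hs
  have hD : 0 < ((q:ℝ)+1)^2 - l^2 := hD_pos hq hl.le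
  have hinner : HasDerivAt (fun l : ℝ => 4*(q:ℝ) - l^2) (-(2*l)) l := by
    simpa using ((hasDerivAt_pow 2 l).const_sub (4*(q:ℝ)))
  have hsq : HasDerivAt (fun l : ℝ => Real.sqrt (4*q - l^2))
      (1 / (2 * Real.sqrt (4*q - l^2)) * (-(2*l))) l :=
    (Real.hasDerivAt_sqrt hs.ne').comp l hinner
  have hnum : HasDerivAt (fun l : ℝ => ((q:ℝ)+1) * Real.sqrt (4*q - l^2))
      (((q:ℝ)+1) * (1 / (2 * Real.sqrt (4*q - l^2)) * (-(2*l)))) l := hsq.const_mul _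
  have hden : HasDerivAt (fun l : ℝ => 2*(((q:ℝ)+1)^2 - l^2)) (2*(-(2*l))) l := by
    have : HasDerivAt (fun l : ℝ => ((q:ℝ)+1)^2 - l^2) (-(2*l)) l := by
      simpa using ((hasDerivAt_pow 2 l).const_sub (((q:ℝ)+1)^2))
    simpa using this.const_mul 2
  have hdne : 2*(((q:ℝ)+1)^2 - l^2) ≠ 0 := by positivity
  have := hnum.div hden hdne
  refine this.congr_deriv (Eq.symm ?_)
  unfold PsiD
  generalize Real.sqrt (4*↑q - l^2) = S at hss hsp ⊢
  have hSne : S ≠ 0 := hsp.ne'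
  have hDne : ((q:ℝ)+1)^2 - l^2 ≠ 0 := hD.ne'
  rw [div_eq_div_iff (by positivity) (by positivity)]
  field_simp
  linear_combination (-2*l) * hss

end basic

section vals
variable {q : ℕ}

lemma b0_sq : (2*Real.sqrt q)^2 = 4*(q:ℝ) := by
  rw [mul_pow, Real.sq_sqrt (by positivity : (0:ℝ) ≤ (q:ℝ))]; ring

lemma psi_b0 : Psi q (2*Real.sqrt q) = 0 := by
  rw [Psi, b0_sq]; simp

lemma psi_nb0 : Psi q (-(2*Real.sqrt q)) = 0 := by
  rw [Psi, neg_pow, b0_sq]; norm_num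

lemma psi_zero (hq : 2 ≤ q) : Psi q 0 = Real.sqrt q / ((q:ℝ)+1) := by
  have hq' := hq1 hq
  have h4 : (4:ℝ)*q = 2^2 * q := by norm_num
  rw [Psi]
  rw [show (4*(q:ℝ) - 0^2) = 2^2*(q:ℝ) by ring, Real.sqrt_mul (by norm_num) _,
    Real.sqrt_sq (by norm_num : (0:ℝ) ≤ 2)]
  field_simp
  ring

lemma psi_E (hq : 2 ≤ q) (hq5 : q ≤ 5) :
    Psi q (Real.sqrt (6*q - q^2 - 1)) = ((q:ℝ)+1) / (4*((q:ℝ)-1)) := by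
  have hq' := hq1 hq
  have hq5' : (q:ℝ) ≤ 5 := by exact_mod_cast hq5
  have hE2 : (0:ℝ) ≤ 6*q - q^2 - 1 := by nlinarith
  have hEs : Real.sqrt (6*q - q^2 - 1) ^ 2 = 6*q - q^2 - 1 := Real.sq_sqrt hE2
  rw [Psi, hEs]
  rw [show 4*(q:ℝ) - (6*q - q^2 - 1) = ((q:ℝ)-1)^2 by ring,
    Real.sqrt_sq (by linarith : (0:ℝ) ≤ (q:ℝ)-1)]
  have h1 : ((q:ℝ)+1)^2 - (6*q - q^2 - 1) = 2*((q:ℝ)-1)^2 := by ring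
  rw [h1]
  have : ((q:ℝ)-1) ≠ 0 := by linarith
  field_simp
  ring

lemma psiD_odd (q : ℕ) (l : ℝ) : PsiD q (-l) = -(PsiD q l) := by
  rw [PsiD, PsiD, neg_pow]
  norm_num [neg_div]

lemma psi_contOn (hq : 2 ≤ q) :
    ContinuousOn (Psi q) (Set.Icc (-(2*Real.sqrt q)) (2*Real.sqrt q)) := by
  have hq' := hq1 hq
  apply ContinuousOn.div
  · exact (continuous_const.mul ((continuous_const.sub (continuous_pow 2)).sqrt)).continuousOn
  · exact (continuous_const.mul (continuous_const.sub (continuous_pow 2))).continuousOn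
  · intro x hx
    have hx2 : x^2 ≤ 4*q := by
      have h1 := hx.1; have h2 := hx.2
      nlinarith [b0_sq (q := q), Real.sqrt_nonneg (q:ℝ)]
    have := hD_pos hq hx2
    positivity

lemma psiD_meas (q : ℕ) : Measurable (PsiD q) := by
  unfold PsiD
  apply Measurable.div
  · fun_prop
  · apply Measurable.mul
    · exact (measurable_const.mul
        (Real.continuous_sqrt.measurable.comp (by fun_prop)))
    · fun_prop

lemma psiD_integrable_right (hq : 2 ≤ q) :
    IntervalIntegrable (PsiD q) volume 0 (2*Real.sqrt q) := by
  have hq' := hq1 hq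
  set b₀ := 2*Real.sqrt q with hb₀
  have hb₀pos : 0 < b₀ := by positivity
  have hb₀sq : b₀^2 = 4*(q:ℝ) := b0_sq
  set Num : ℝ := ((q:ℝ)+1)*b₀*((q:ℝ)^2+10*q+1) with hNum
  have hNumpos : 0 < Num := by positivity
  set K : ℝ := Num/(2*Real.sqrt b₀) with hK
  have hmaj : IntervalIntegrable (fun x => K * (b₀ - x) ^ (-(1/2) : ℝ)) volume 0 b₀ := by
    have h1 : IntervalIntegrable (fun x : ℝ => x ^ (-(1/2) : ℝ)) volume 0 b₀ :=
      intervalIntegral.intervalIntegrable_rpow' (by norm_num)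
    have h2 := (h1.comp_sub_left b₀)
    simp only [sub_zero, sub_self] at h2
    exact (h2.symm.const_mul K)
  refine hmaj.mono_fun' ((psiD_meas q).aestronglyMeasurable) ?_
  have huIoc : Set.uIoc (0:ℝ) b₀ = Set.Ioc 0 b₀ := Set.uIoc_of_le hb₀pos.le
  rw [Filter.EventuallyLE, ae_restrict_iff' measurableSet_uIoc]
  refine Filter.Eventually.of_forall ?_
  intro x hx
  rw [huIoc] at hx
  obtain ⟨hx0, hxb⟩ := hx
  rcases eq_or_lt_of_le hxb with heq | hlt
  · -- x = b₀ : PsiD is junk 0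
    have h0 : Real.sqrt (4*q - x^2) = 0 := by
      rw [heq, hb₀sq, sub_self, Real.sqrt_zero]
    rw [Real.norm_eq_abs, PsiD, h0, heq]
    simp [Real.zero_rpow (show (-(1/2):ℝ) ≠ 0 by norm_num)]
  · have hx2 : x^2 < 4*q := by nlinarith
    have hs : 0 < Real.sqrt (4*q - x^2) := Real.sqrt_pos.2 (by linarith)
    set s := Real.sqrt (4*q - x^2) with hsdef
    have hss : s^2 = 4*q - x^2 := Real.sq_sqrt (by linarith)
    have hD : ((q:ℝ)+1)^2 - x^2 ≥ ((q:ℝ)-1)^2 := by nlinarith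
    have hDq : (1:ℝ) ≤ ((q:ℝ)-1)^2 := by nlinarith
    have hD' : (1:ℝ) ≤ ((q:ℝ)+1)^2 - x^2 := le_trans hDq hD
    have hD1 : (1:ℝ) ≤ (((q:ℝ)+1)^2 - x^2)^2 := by nlinarith
    -- bound numerator
    have hnum : |((q:ℝ)+1) * x * ((6*q - q^2 - 1) - x^2)| ≤ Num := by
      rw [abs_mul, abs_mul]
      have h1 : |((q:ℝ)+1)| = (q:ℝ)+1 := abs_of_pos (by linarith)
      have h2 : |x| ≤ b₀ := by rw [abs_of_pos hx0]; linarith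
      have h3 : |(6*q - q^2 - 1) - x^2| ≤ (q:ℝ)^2+10*q+1 := by
        rw [abs_le]; constructor <;> nlinarith
      calc |((q:ℝ)+1)| * |x| * |(6*q - q^2 - 1) - x^2|
          ≤ (((q:ℝ)+1)) * b₀ * ((q:ℝ)^2+10*q+1) := by
            apply mul_le_mul _ h3 (abs_nonneg _) (by positivity)
            rw [h1]; exact mul_le_mul_of_nonneg_left h2 (by linarith)
        _ = Num := rfl
    -- lower bound denominator by 2 * sqrt(b₀-x) * sqrt b₀
    have hsplit : s = Real.sqrt (b₀ - x) * Real.sqrt (b₀ + x) := by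
      rw [hsdef, ← Real.sqrt_mul (by linarith), ← hb₀sq]; ring_nf
    have hslow : Real.sqrt (b₀ - x) * Real.sqrt b₀ ≤ s := by
      rw [hsplit]
      exact mul_le_mul_of_nonneg_left
        (Real.sqrt_le_sqrt (by linarith)) (Real.sqrt_nonneg _)
    have hsbx : 0 < Real.sqrt (b₀ - x) := Real.sqrt_pos.2 (by linarith)
    have hsb : 0 < Real.sqrt b₀ := Real.sqrt_pos.2 hb₀pos
    have hrpow : (b₀ - x) ^ (-(1/2) : ℝ) = 1 / Real.sqrt (b₀ - x) := by
      rw [Real.rpow_neg (by linarith), Real.sqrt_eq_rpow]; norm_num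
    rw [Real.norm_eq_abs, PsiD, abs_div]
    have hdenpos : 0 < 2 * s * (((q:ℝ)+1)^2 - x^2)^2 := by positivity
    rw [abs_of_pos hdenpos]
    have step1 : |((q:ℝ)+1) * x * ((6*q - q^2 - 1) - x^2)| / (2 * s * (((q:ℝ)+1)^2 - x^2)^2)
        ≤ Num / (2 * (Real.sqrt (b₀ - x) * Real.sqrt b₀)) := by
      apply div_le_div₀ hNumpos.le hnum (by positivity)
      calc 2 * (Real.sqrt (b₀ - x) * Real.sqrt b₀) ≤ 2 * s := by linarith
        _ ≤ 2 * s * (((q:ℝ)+1)^2 - x^2)^2 := le_mul_of_one_le_right (by positivity) hD1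
    refine step1.trans (le_of_eq ?_)
    rw [hK, hrpow, div_mul_div_comm, mul_one]
    ring_nf

lemma psiD_integrable_left (hq : 2 ≤ q) :
    IntervalIntegrable (PsiD q) volume (-(2*Real.sqrt q)) 0 := by
  have h : IntervalIntegrable (fun x => PsiD q (-x)) volume (2*Real.sqrt q) 0 := by
    have := ((psiD_integrable_right hq).symm.neg)
    simpa [psiD_odd, Pi.neg_def] using this
  have h2 := (IntervalIntegrable.iff_comp_neg
    (f := PsiD q) (a := -(2*Real.sqrt q)) (b := 0)).mpr
  simp only [neg_neg, neg_zero] at h2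
  exact h2 h

lemma psiD_integrable (hq : 2 ≤ q) :
    IntervalIntegrable (PsiD q) volume (-(2*Real.sqrt q)) (2*Real.sqrt q) :=
  (psiD_integrable_left hq).trans (psiD_integrable_right hq)

lemma psiD_integrable_sub (hq : 2 ≤ q) {c d : ℝ}
    (hc : -(2*Real.sqrt q) ≤ c) (hd : d ≤ 2*Real.sqrt q) (hcd : c ≤ d) :
    IntervalIntegrable (PsiD q) volume c d := by
  apply (psiD_integrable hq).mono_set'
  rw [Set.uIoc_of_le hcd, Set.uIoc_of_le (by linarith)]
  exact Set.Ioc_subset_Ioc hc hd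

/-- FTC on subintervals -/
lemma psiD_ftc (hq : 2 ≤ q) {c d : ℝ}
    (hc : -(2*Real.sqrt q) ≤ c) (hd : d ≤ 2*Real.sqrt q) (hcd : c ≤ d) :
    ∫ x in c..d, PsiD q x = Psi q d - Psi q c := by
  have hq' := hq1 hq
  apply intervalIntegral.integral_eq_sub_of_hasDeriv_right_of_le hcd
  · exact (psi_contOn hq).mono (Set.Icc_subset_Icc hc hd)
  · intro x hx
    have hx1 : -(2*Real.sqrt q) < x := lt_of_le_of_lt hc hx.1
    have hx2 : x < 2*Real.sqrt q := lt_of_lt_of_le hx.2 hd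
    have : x^2 < 4*q := by
      calc x^2 < (2*Real.sqrt q)^2 := sq_lt_sq' hx1 hx2
        _ = 4*q := b0_sq
    exact (psi_hasDeriv hq this).hasDerivWithinAt
  · exact psiD_integrable_sub hq hc hd hcd

end vals

section key
variable {q : ℕ}

lemma key_bound (hq : 2 ≤ q) (t : ℝ) (ht : 0 < t) :
    ‖∫ l in (-(2*Real.sqrt q))..(2*Real.sqrt q),
        Complex.exp (Complex.I * t * l) * (Psi q l : ℂ)‖
      ≤ (∫ l in (-(2*Real.sqrt q))..(2*Real.sqrt q), |PsiD q l|) / t := by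
  have hq' := hq1 hq
  set b₀ := 2*Real.sqrt q with hb₀
  have hb₀pos : 0 < b₀ := by positivity
  have hord : -b₀ ≤ b₀ := by linarith
  set F : ℝ → ℂ := fun l => Complex.exp (Complex.I * t * l) * (Psi q l : ℂ) with hF
  set G1 : ℝ → ℂ := fun l => Complex.exp (Complex.I * t * l) * (Complex.I * t) * (Psi q l : ℂ)
    with hG1
  set G2 : ℝ → ℂ := fun l => Complex.exp (Complex.I * t * l) * (PsiD q l : ℂ) with hG2
  have hexpcont : Continuous (fun l : ℝ => Complex.exp (Complex.I * t * l)) :=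
    Complex.continuous_exp.comp (continuous_const.mul Complex.continuous_ofReal)
  have hpsicont : ContinuousOn (fun l : ℝ => (Psi q l : ℂ)) (Set.Icc (-b₀) b₀) :=
    Complex.continuous_ofReal.comp_continuousOn (psi_contOn hq)
  have hFcont : ContinuousOn F (Set.Icc (-b₀) b₀) :=
    (hexpcont.continuousOn).mul hpsicont
  have hG1int : IntervalIntegrable G1 volume (-b₀) b₀ := by
    apply ContinuousOn.intervalIntegrable
    rw [Set.uIcc_of_le hord]
    exact ((hexpcont.continuousOn).mul continuousOn_const).mul hpsicont
  have hPsiDc : IntervalIntegrable (fun l => (PsiD q l : ℂ)) volume (-b₀) b₀ := by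
    have h := psiD_integrable hq
    exact ⟨h.1.ofReal, h.2.ofReal⟩
  have hG2int : IntervalIntegrable G2 volume (-b₀) b₀ := by
    have := hPsiDc.continuousOn_mul (g := fun l : ℝ => Complex.exp (Complex.I * t * l))
      (hexpcont.continuousOn)
    exact this
  have hderiv : ∀ x ∈ Set.Ioo (-b₀) b₀, HasDerivWithinAt F (G1 x + G2 x) (Set.Ioi x) x := by
    intro x hx
    have hx2 : x^2 < 4*q := by
      calc x^2 < b₀^2 := sq_lt_sq' hx.1 hx.2
        _ = 4*q := b0_sq
    have h1 : HasDerivAt (fun l : ℝ => (Complex.I * t) * (l : ℂ)) (Complex.I * t) x := by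
      simpa using (Complex.ofRealCLM.hasDerivAt (x := x)).const_mul (Complex.I * (t:ℂ))
    have hexp : HasDerivAt (fun l : ℝ => Complex.exp (Complex.I * t * l))
        (Complex.exp (Complex.I * t * x) * (Complex.I * t)) x := by
      have := h1.cexp
      simpa [mul_assoc] using this
    have hpsi : HasDerivAt (fun l : ℝ => ((Psi q l : ℝ) : ℂ)) ((PsiD q x : ℝ) : ℂ) x :=
      (psi_hasDeriv hq hx2).ofReal_comp
    have := hexp.mul hpsi
    exact this.hasDerivWithinAt
  have hftc : ∫ x in (-b₀)..b₀, (G1 x + G2 x) = F b₀ - F (-b₀) :=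
    intervalIntegral.integral_eq_sub_of_hasDeriv_right_of_le hord hFcont hderiv
      (hG1int.add hG2int)
  have hFend : F b₀ - F (-b₀) = 0 := by
    rw [hF]
    simp only [hb₀]
    rw [psi_b0, psi_nb0]
    simp
  rw [hFend, intervalIntegral.integral_add hG1int hG2int] at hftc
  have hG1eq : ∫ x in (-b₀)..b₀, G1 x = (Complex.I * t) * ∫ x in (-b₀)..b₀, F x := by
    rw [← intervalIntegral.integral_const_mul]
    apply intervalIntegral.integral_congr
    intro x _
    rw [hG1, hF]; ring
  rw [hG1eq] at hftc
  have hIt : ((Complex.I * t) * ∫ x in (-b₀)..b₀, F x) = -∫ x in (-b₀)..b₀, G2 x := by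
    linear_combination hftc
  have hnormIt : ‖Complex.I * (t:ℂ)‖ = t := by
    rw [norm_mul, Complex.norm_I, Complex.norm_real, one_mul, Real.norm_eq_abs, abs_of_pos ht]
  have hnorm : t * ‖∫ x in (-b₀)..b₀, F x‖ = ‖∫ x in (-b₀)..b₀, G2 x‖ := by
    rw [← hnormIt, ← norm_mul, hIt, norm_neg]
  have hle2 : ‖∫ x in (-b₀)..b₀, G2 x‖ ≤ ∫ x in (-b₀)..b₀, |PsiD q x| := by
    refine (intervalIntegral.norm_integral_le_integral_norm hord).trans (le_of_eq ?_)
    apply intervalIntegral.integral_congr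
    intro x _
    simp only
    rw [norm_mul, Complex.norm_exp]
    have hre : (Complex.I * t * x).re = 0 := by simp
    rw [hre, Real.exp_zero, one_mul, Complex.norm_real, Real.norm_eq_abs]
  rw [le_div_iff₀ ht, mul_comm, hnorm]
  exact hle2

end key

section tv
variable {q : ℕ}

lemma psiD_nonneg {x : ℝ} (h : 0 ≤ ((q:ℝ)+1) * x * ((6*q - q^2 - 1) - x^2)) :
    0 ≤ PsiD q x :=
  div_nonneg h (by positivity)

lemma psiD_nonpos {x : ℝ} (h : ((q:ℝ)+1) * x * ((6*q - q^2 - 1) - x^2) ≤ 0) :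
    PsiD q x ≤ 0 :=
  div_nonpos_of_nonpos_of_nonneg h (by positivity)

lemma abs_piece_pos (hq : 2 ≤ q) {c d : ℝ} (hc : -(2*Real.sqrt q) ≤ c)
    (hd : d ≤ 2*Real.sqrt q) (hcd : c ≤ d)
    (hsign : ∀ x ∈ Set.Icc c d, 0 ≤ PsiD q x) :
    ∫ x in c..d, |PsiD q x| = Psi q d - Psi q c := by
  rw [intervalIntegral.integral_congr (g := PsiD q) (fun x hx => by
    rw [Set.uIcc_of_le hcd] at hx; exact abs_of_nonneg (hsign x hx))]
  exact psiD_ftc hq hc hd hcd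

lemma abs_piece_neg (hq : 2 ≤ q) {c d : ℝ} (hc : -(2*Real.sqrt q) ≤ c)
    (hd : d ≤ 2*Real.sqrt q) (hcd : c ≤ d)
    (hsign : ∀ x ∈ Set.Icc c d, PsiD q x ≤ 0) :
    ∫ x in c..d, |PsiD q x| = Psi q c - Psi q d := by
  rw [intervalIntegral.integral_congr (g := fun x => -(PsiD q x)) (fun x hx => by
    rw [Set.uIcc_of_le hcd] at hx; exact abs_of_nonpos (hsign x hx)),
    intervalIntegral.integral_neg, psiD_ftc hq hc hd hcd]
  ring

lemma tv_ge6 (hq6 : 6 ≤ q) :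
    ∫ x in (-(2*Real.sqrt q))..(2*Real.sqrt q), |PsiD q x|
      = 2*Real.sqrt q / ((q:ℝ)+1) := by
  have hq : 2 ≤ q := le_trans (by norm_num) hq6
  have hq6' : (6:ℝ) ≤ (q:ℝ) := by exact_mod_cast hq6
  have hb₀pos : (0:ℝ) < 2*Real.sqrt q := by positivity
  have hs1 : ∀ x ∈ Set.Icc (-(2*Real.sqrt q)) (0:ℝ), 0 ≤ PsiD q x := by
    intro x hx
    apply psiD_nonneg
    have h1 : x ≤ 0 := hx.2
    have h2 : (6*(q:ℝ) - q^2 - 1) - x^2 ≤ 0 := by nlinarith [sq_nonneg x]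
    nlinarith [mul_nonneg (neg_nonneg.2 h1) (neg_nonneg.2 h2)]
  have hs2 : ∀ x ∈ Set.Icc (0:ℝ) (2*Real.sqrt q), PsiD q x ≤ 0 := by
    intro x hx
    apply psiD_nonpos
    have h1 : 0 ≤ x := hx.1
    have h2 : (6*(q:ℝ) - q^2 - 1) - x^2 ≤ 0 := by nlinarith [sq_nonneg x]
    nlinarith [mul_nonpos_of_nonneg_of_nonpos h1 h2]
  rw [← intervalIntegral.integral_add_adjacent_intervals (b := (0:ℝ))
      ((psiD_integrable_left hq).abs) ((psiD_integrable_right hq).abs),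
    abs_piece_pos hq le_rfl hb₀pos.le (by linarith) hs1,
    abs_piece_neg hq (by linarith) le_rfl hb₀pos.le hs2,
    psi_nb0, psi_b0, psi_zero hq]
  ring

end tv

section tv5
variable {q : ℕ}

lemma psi_even (q : ℕ) (l : ℝ) : Psi q (-l) = Psi q l := by
  rw [Psi, Psi, neg_pow]; norm_num

lemma sqrt4q (q : ℕ) : Real.sqrt (4*(q:ℝ)) = 2*Real.sqrt q := by
  rw [show (4:ℝ)*(q:ℝ) = 2^2*(q:ℝ) by ring, Real.sqrt_mul (by norm_num) _,
    Real.sqrt_sq (by norm_num : (0:ℝ) ≤ 2)]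

lemma tv_le5 (hq : 2 ≤ q) (hq5 : q ≤ 5) :
    ∫ x in (-(2*Real.sqrt q))..(2*Real.sqrt q), |PsiD q x|
      = ((q:ℝ)+1)/((q:ℝ)-1) - 2*Real.sqrt q/((q:ℝ)+1) := by
  have hq' := hq1 hq
  have hq5' : (q:ℝ) ≤ 5 := by exact_mod_cast hq5
  have hb₀pos : (0:ℝ) < 2*Real.sqrt q := by positivity
  set E := Real.sqrt (6*(q:ℝ) - q^2 - 1) with hE
  have hE2nn : (0:ℝ) ≤ 6*(q:ℝ) - q^2 - 1 := by nlinarith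
  have hE2 : E^2 = 6*(q:ℝ) - q^2 - 1 := Real.sq_sqrt hE2nn
  have hE0 : 0 ≤ E := Real.sqrt_nonneg _
  have hEb : E ≤ 2*Real.sqrt q := by
    rw [hE, ← sqrt4q]
    exact Real.sqrt_le_sqrt (by nlinarith)
  -- signs on the four pieces
  have hs1 : ∀ x ∈ Set.Icc (-(2*Real.sqrt q)) (-E), 0 ≤ PsiD q x := by
    intro x hx
    apply psiD_nonneg
    have h1 : x ≤ -E := hx.2
    have h1' : x ≤ 0 := by linarith
    have h2 : (6*(q:ℝ) - q^2 - 1) - x^2 ≤ 0 := by nlinarith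
    nlinarith [mul_nonneg (neg_nonneg.2 h1') (neg_nonneg.2 h2)]
  have hs2 : ∀ x ∈ Set.Icc (-E) (0:ℝ), PsiD q x ≤ 0 := by
    intro x hx
    apply psiD_nonpos
    have h1 : -E ≤ x := hx.1
    have h1' : x ≤ 0 := hx.2
    have h2 : 0 ≤ (6*(q:ℝ) - q^2 - 1) - x^2 := by nlinarith
    nlinarith [mul_nonneg (neg_nonneg.2 h1') h2]
  have hs3 : ∀ x ∈ Set.Icc (0:ℝ) E, 0 ≤ PsiD q x := by
    intro x hx
    apply psiD_nonneg
    have h1 : 0 ≤ x := hx.1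
    have h1' : x ≤ E := hx.2
    have h2 : 0 ≤ (6*(q:ℝ) - q^2 - 1) - x^2 := by nlinarith
    nlinarith [mul_nonneg h1 h2]
  have hs4 : ∀ x ∈ Set.Icc E (2*Real.sqrt q), PsiD q x ≤ 0 := by
    intro x hx
    apply psiD_nonpos
    have h1 : E ≤ x := hx.1
    have h1' : 0 ≤ x := le_trans hE0 h1
    have h2 : (6*(q:ℝ) - q^2 - 1) - x^2 ≤ 0 := by nlinarith
    nlinarith [mul_nonpos_of_nonneg_of_nonpos h1' h2]
  -- split the integral
  have i1 : IntervalIntegrable (fun x => |PsiD q x|) volume (-(2*Real.sqrt q)) (-E) :=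
    (psiD_integrable_sub hq le_rfl (by linarith) (by linarith)).abs
  have i2 : IntervalIntegrable (fun x => |PsiD q x|) volume (-E) 0 :=
    (psiD_integrable_sub hq (by linarith) hb₀pos.le (by linarith)).abs
  have i3 : IntervalIntegrable (fun x => |PsiD q x|) volume 0 E :=
    (psiD_integrable_sub hq (by linarith) hEb hE0).abs
  have i4 : IntervalIntegrable (fun x => |PsiD q x|) volume E (2*Real.sqrt q) :=
    (psiD_integrable_sub hq (by linarith) le_rfl hEb).abs
  rw [← intervalIntegral.integral_add_adjacent_intervals (b := (0:ℝ))
      (i1.trans i2) (i3.trans i4),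
    ← intervalIntegral.integral_add_adjacent_intervals (b := -E) i1 i2,
    ← intervalIntegral.integral_add_adjacent_intervals (b := E) i3 i4,
    abs_piece_pos hq le_rfl (by linarith) (by linarith) hs1,
    abs_piece_neg hq (by linarith) hb₀pos.le (by linarith) hs2,
    abs_piece_pos hq (by linarith) hEb hE0 hs3,
    abs_piece_neg hq (by linarith) le_rfl hEb hs4,
    psi_nb0, psi_b0, psi_zero hq, psi_even,
    show E = Real.sqrt (6*(q:ℝ) - q^2 - 1) from hE]
  rw [show (6*(q:ℝ) - q^2 - 1) = (6*(q:ℕ) - (q:ℕ)^2 - 1 : ℝ) by ring]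
  rw [psi_E hq hq5]
  have h1 : ((q:ℝ)-1) ≠ 0 := by linarith
  have h2 : ((q:ℝ)+1) ≠ 0 := by linarith
  field_simp
  ring

end tv5

/-- Total-variation bounds on the oscillatory integral `∫_{−2√q}^{2√q} e^{itλ}Ψ(λ)dλ`:
for all `t > 0`, the modulus is at most `(2√q/(q+1))/t` if `q ≥ 6`, and at most
`((q+1)/(q−1) − 2√q/(q+1))/t` if `2 ≤ q ≤ 5`. -/
theorem total_variation_bound (q : ℕ) (hq : 2 ≤ q) :
    ∀ t : ℝ, 0 < t →
      ((6 ≤ q →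
        ‖∫ l in (-(2*Real.sqrt q))..(2*Real.sqrt q),
            Complex.exp (Complex.I * t * l) * (Psi q l : ℂ)‖
          ≤ (2*Real.sqrt q/((q:ℝ)+1)) / t) ∧
      (q ≤ 5 →
        ‖∫ l in (-(2*Real.sqrt q))..(2*Real.sqrt q),
            Complex.exp (Complex.I * t * l) * (Psi q l : ℂ)‖
          ≤ (((q:ℝ)+1)/((q:ℝ)-1) - 2*Real.sqrt q/((q:ℝ)+1)) / t)) := by
  intro t ht
  constructor
  · intro hq6
    refine (key_bound hq t ht).trans (le_of_eq ?_)
    rw [tv_ge6 hq6]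
  · intro hq5
    refine (key_bound hq t ht).trans (le_of_eq ?_)
    rw [tv_le5 hq hq5]
end

section
/- Let q ≥ 2 and n ≥ 1 be integers, Ψ(λ) = (q+1)√(4q − λ²)/(2((q+1)² − λ²)), and Φ_n the spherical function. Then the function λ ↦ Ψ(λ)Φ_n'(λ) is differentiable on (−2√q, 2√q) and its total variation satisfies ∫_{−2√q}^{2√q} |(Ψ Φ_n')'(λ)| dλ ≤ (n+2) n² q^{−n/2} (2 + (n+1)(q−1)) / (q−1)². -/
open Set Real MeasureTheory intervalIntegral

/-- The spherical function of the `(q+1)`-regular tree. -/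
noncomputable def Phi (q n : ℕ) (l : ℝ) : ℝ :=
  (q:ℝ) ^ (-(n:ℝ)/2) *
    ((2/((q:ℝ)+1)) * (Polynomial.Chebyshev.T ℝ (n:ℤ)).eval (l/(2*Real.sqrt q))
      + (((q:ℝ)-1)/((q:ℝ)+1)) * (Polynomial.Chebyshev.U ℝ (n:ℤ)).eval (l/(2*Real.sqrt q)))

section Aux

open Polynomial Polynomial.Chebyshev

/-! ### Total variation lemmas -/

lemma tv_mono (g : ℝ → ℝ) (u v : ℝ) (huv : u ≤ v) (hc : ContinuousOn g (Icc u v))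
    (hd : ∀ x ∈ Ioo u v, DifferentiableAt ℝ g x) (hpos : ∀ x ∈ Ioo u v, 0 ≤ deriv g x) :
    IntervalIntegrable (fun x => |deriv g x|) volume u v ∧
      (∫ x in u..v, |deriv g x|) ≤ g v - g u := by
  have hint : IntegrableOn (fun x => deriv g x) (Ioc u v) :=
    integrableOn_deriv_of_nonneg hc (fun x hx => (hd x hx).hasDerivAt) hpos
  have habs : IntegrableOn (fun x => |deriv g x|) (Ioc u v) := hint.abs
  have hIcc : IntegrableOn (fun x => |deriv g x|) (Icc u v) :=
    (integrableOn_Icc_iff_integrableOn_Ioc).2 habs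
  refine ⟨(intervalIntegrable_iff_integrableOn_Ioc_of_le huv).2 habs, ?_⟩
  exact integral_le_sub_of_hasDeriv_right_of_le huv hc
    (fun x hx => ((hd x hx).hasDerivAt).hasDerivWithinAt) hIcc
    (fun x hx => le_of_eq (abs_of_nonneg (hpos x hx)))

lemma tv_piece (g : ℝ → ℝ) (R : Polynomial ℝ) (u v : ℝ) (huv : u ≤ v)
    (hc : ContinuousOn g (Icc u v)) (hd : ∀ x ∈ Ioo u v, DifferentiableAt ℝ g x)
    (hsign : ∀ x ∈ Ioo u v, ∃ c : ℝ, 0 < c ∧ deriv g x = c * R.eval x)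
    (hz : ∀ x ∈ Ioo u v, R.eval x ≠ 0) :
    IntervalIntegrable (fun x => |deriv g x|) volume u v ∧
      (∫ x in u..v, |deriv g x|) ≤ |g v - g u| := by
  have dich : (∀ x ∈ Ioo u v, 0 ≤ deriv g x) ∨ (∀ x ∈ Ioo u v, deriv g x ≤ 0) := by
    by_contra h
    push_neg at h
    obtain ⟨⟨x₁, hx₁, h1⟩, ⟨x₂, hx₂, h2⟩⟩ := h
    obtain ⟨c₁, hc₁, he₁⟩ := hsign x₁ hx₁
    obtain ⟨c₂, hc₂, he₂⟩ := hsign x₂ hx₂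
    have hR1 : R.eval x₁ < 0 := by
      by_contra hh
      push_neg at hh
      rw [he₁] at h1; nlinarith
    have hR2 : 0 < R.eval x₂ := by
      rcases lt_trichotomy (R.eval x₂) 0 with h' | h' | h'
      · rw [he₂] at h2; nlinarith
      · rw [he₂, h', mul_zero] at h2; exact absurd h2 (lt_irrefl 0)
      · exact h'
    have hsub : uIcc x₁ x₂ ⊆ Ioo u v :=
      (Set.ordConnected_Ioo).uIcc_subset hx₁ hx₂
    have hcont : ContinuousOn (fun x => R.eval x) (uIcc x₁ x₂) :=
      (Polynomial.continuous R).continuousOn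
    have h0 : (0:ℝ) ∈ uIcc (R.eval x₁) (R.eval x₂) := by
      rw [Set.mem_uIcc]; left; exact ⟨hR1.le, hR2.le⟩
    obtain ⟨y, hy, hy0⟩ := intermediate_value_uIcc hcont h0
    exact hz y (hsub hy) hy0
  rcases dich with hp | hm
  · obtain ⟨II, hb⟩ := tv_mono g u v huv hc hd hp
    exact ⟨II, hb.trans (le_abs_self _)⟩
  · obtain ⟨II, hb⟩ := tv_mono (fun x => -g x) u v huv hc.neg
      (fun x hx => (hd x hx).neg)
      (fun x hx => by rw [deriv.fun_neg]; linarith [hm x hx])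
    have hfe : (fun x => |deriv (fun y => -g y) x|) = fun x => |deriv g x| := by
      funext x; rw [deriv.fun_neg, abs_neg]
    rw [hfe] at II hb
    refine ⟨II, hb.trans ?_⟩
    rw [abs_sub_comm]
    have : g u - g v ≤ |g u - g v| := le_abs_self _
    linarith

lemma tv_key (g : ℝ → ℝ) (R : Polynomial ℝ) (hR : R ≠ 0) (M : ℝ) (b : ℝ) :
    ∀ (k : ℕ) (a : ℝ), a ≤ b → ContinuousOn g (Icc a b) →
    (∀ x ∈ Ioo a b, DifferentiableAt ℝ g x) →
    (∀ x ∈ Ioo a b, ∃ c : ℝ, 0 < c ∧ deriv g x = c * R.eval x) →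
    (∀ x ∈ Icc a b, |g x| ≤ M) →
    ((R.roots.toFinset.filter (fun x => x ∈ Ioo a b)).card = k) →
    IntervalIntegrable (fun x => |deriv g x|) volume a b ∧
      (∫ x in a..b, |deriv g x|) ≤ |g a| + |g b| + 2 * M * k := by
  intro k
  induction k with
  | zero =>
    intro a hab hc hd hsign hM hcard
    have hz : ∀ x ∈ Ioo a b, R.eval x ≠ 0 := by
      intro x hx hx0
      have hmem : x ∈ R.roots.toFinset.filter (fun x => x ∈ Ioo a b) :=
        Finset.mem_filter.2 ⟨Multiset.mem_toFinset.2 ((mem_roots hR).2 hx0), hx⟩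
      rw [Finset.card_eq_zero] at hcard
      rw [hcard] at hmem
      exact absurd hmem (Finset.notMem_empty x)
    obtain ⟨II, hb⟩ := tv_piece g R a b hab hc hd hsign hz
    have h2 : |g b - g a| ≤ |g a| + |g b| := (abs_sub _ _).trans (by linarith [abs_nonneg (g a)])
    refine ⟨II, hb.trans (by push_cast; linarith)⟩
  | succ k ih =>
    intro a hab hc hd hsign hM hcard
    set S := R.roots.toFinset.filter (fun x => x ∈ Ioo a b) with hS
    have hne : S.Nonempty := by
      rw [← Finset.card_pos, hcard]; exact Nat.succ_pos k
    set m := S.min' hne with hm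
    have hmS : m ∈ S := S.min'_mem hne
    have hmIoo : m ∈ Ioo a b := by
      have := hmS; rw [hS, Finset.mem_filter] at this; exact this.2
    have hmroot : R.eval m = 0 := by
      have := hmS; rw [hS, Finset.mem_filter, Multiset.mem_toFinset, mem_roots hR] at this
      exact this.1
    have ham : a ≤ m := hmIoo.1.le
    have hmb : m ≤ b := hmIoo.2.le
    have hz1 : ∀ x ∈ Ioo a m, R.eval x ≠ 0 := by
      intro x hx hx0
      have hxS : x ∈ S := by
        rw [hS, Finset.mem_filter, Multiset.mem_toFinset, mem_roots hR]
        exact ⟨hx0, Set.mem_Ioo.2 ⟨hx.1, hx.2.trans hmIoo.2⟩⟩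
      exact absurd (S.min'_le x hxS) (not_le.2 hx.2)
    have hsub1 : Ioo a m ⊆ Ioo a b := Ioo_subset_Ioo le_rfl hmb
    have hsub2 : Ioo m b ⊆ Ioo a b := Ioo_subset_Ioo ham le_rfl
    obtain ⟨II₁, I1⟩ := tv_piece g R a m ham (hc.mono (Icc_subset_Icc le_rfl hmb))
      (fun x hx => hd x (hsub1 hx)) (fun x hx => hsign x (hsub1 hx)) hz1
    have memS : ∀ (x a' : ℝ), (x ∈ R.roots.toFinset.filter (fun y => y ∈ Ioo a' b)) ↔
        (R.IsRoot x ∧ a' < x ∧ x < b) := by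
      intro x a'
      simp only [Finset.mem_filter, Multiset.mem_toFinset, mem_roots hR, Set.mem_Ioo]
    have hserase : R.roots.toFinset.filter (fun x => x ∈ Ioo m b) = S.erase m := by
      ext x
      rw [memS x m, Finset.mem_erase, hS, memS x a]
      constructor
      · rintro ⟨h1, h2, h3⟩
        exact ⟨ne_of_gt h2, h1, hmIoo.1.trans h2, h3⟩
      · rintro ⟨hne', h1, hax, h3⟩
        have hxS : x ∈ S := by rw [hS, memS x a]; exact ⟨h1, hax, h3⟩
        have hle := S.min'_le x hxS
        exact ⟨h1, lt_of_le_of_ne hle (Ne.symm hne'), h3⟩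
    obtain ⟨II₂, I2⟩ := ih m hmb (hc.mono (Icc_subset_Icc ham le_rfl))
      (fun x hx => hd x (hsub2 hx)) (fun x hx => hsign x (hsub2 hx))
      (fun x hx => hM x ⟨ham.trans hx.1, hx.2⟩)
      (by rw [hserase, Finset.card_erase_of_mem hmS, hcard]; rfl)
    have II : IntervalIntegrable (fun x => |deriv g x|) volume a b := II₁.trans II₂
    have hsplit : (∫ x in a..m, |deriv g x|) + (∫ x in m..b, |deriv g x|)
        = ∫ x in a..b, |deriv g x| := integral_add_adjacent_intervals II₁ II₂
    have hgm : |g m| ≤ M := hM m ⟨ham, hmb⟩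
    have h1' : |g m - g a| ≤ |g a| + |g m| := by
      calc |g m - g a| ≤ |g m| + |g a| := abs_sub _ _
        _ = |g a| + |g m| := by ring
    refine ⟨II, ?_⟩
    rw [← hsplit]
    push_cast
    linarith

/-! ### Chebyshev bounds -/

lemma chebT_bound (n : ℤ) (y : ℝ) (hy : y ∈ Icc (-1:ℝ) 1) :
    |(T ℝ n).eval y| ≤ 1 := by
  obtain ⟨θ, hθ⟩ : ∃ θ, Real.cos θ = y := ⟨Real.arccos y, Real.cos_arccos hy.1 hy.2⟩
  rw [← hθ, T_real_cos]
  exact Real.abs_cos_le_one _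

lemma chebU_bound : ∀ n : ℕ, ∀ y ∈ Icc (-1:ℝ) 1, |(U ℝ (n:ℤ)).eval y| ≤ (n:ℝ) + 1 := by
  intro n
  induction n with
  | zero => intro y hy; simp [U_zero]
  | succ n ih =>
    intro y hy
    have hrec : U ℝ ((n:ℤ)+1) = X * U ℝ (n:ℤ) + T ℝ ((n:ℤ)+1) := U_eq_X_mul_U_add_T ℝ (n:ℤ)
    have hcast : ((n+1 : ℕ) : ℤ) = (n:ℤ) + 1 := by push_cast; ring
    rw [hcast, hrec]
    simp only [eval_add, eval_mul, eval_X]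
    have hy1 : |y| ≤ 1 := abs_le.2 ⟨hy.1, hy.2⟩
    calc |y * (U ℝ (n:ℤ)).eval y + (T ℝ ((n:ℤ)+1)).eval y|
        ≤ |y * (U ℝ (n:ℤ)).eval y| + |(T ℝ ((n:ℤ)+1)).eval y| := abs_add_le _ _
      _ ≤ 1 * ((n:ℝ)+1) + 1 := by
          gcongr
          · rw [abs_mul]
            exact mul_le_mul hy1 (ih y hy) (abs_nonneg _) zero_le_one
          · exact chebT_bound _ y hy
      _ = (↑(n+1):ℝ) + 1 := by push_cast; ring

lemma chebT_deriv_bound : ∀ n : ℕ, ∀ y ∈ Icc (-1:ℝ) 1,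
    |(derivative (T ℝ (n:ℤ))).eval y| ≤ (n:ℝ)^2 := by
  intro n y hy
  rw [T_derivative_eq_U]
  cases n with
  | zero => simp
  | succ m =>
    simp only [eval_mul, eval_intCast]
    have h0 : ((m+1:ℕ):ℤ) - 1 = (m:ℤ) := by push_cast; ring
    rw [h0, abs_mul]
    have h1 : |((((m+1:ℕ):ℤ)):ℝ)| = (m:ℝ)+1 := by
      rw [show ((((m+1:ℕ):ℤ)):ℝ) = (m:ℝ)+1 by push_cast; ring]
      rw [abs_of_nonneg (by positivity)]
    rw [h1]
    have h2 := chebU_bound m y hy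
    have h3 : (0:ℝ) ≤ |(U ℝ (m:ℤ)).eval y| := abs_nonneg _
    push_cast
    nlinarith

lemma chebU_deriv_bound : ∀ n : ℕ, ∀ y ∈ Icc (-1:ℝ) 1,
    |(derivative (U ℝ (n:ℤ))).eval y| ≤ (n:ℝ)^2 * ((n:ℝ)+1) := by
  intro n
  induction n with
  | zero => intro y hy; simp [U_zero]
  | succ n ih =>
    intro y hy
    have hy1 : |y| ≤ 1 := abs_le.2 ⟨hy.1, hy.2⟩
    have hcast : ((n+1 : ℕ) : ℤ) = (n:ℤ) + 1 := by push_cast; ring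
    have hrec : U ℝ ((n:ℤ)+1) = X * U ℝ (n:ℤ) + T ℝ ((n:ℤ)+1) := U_eq_X_mul_U_add_T ℝ (n:ℤ)
    rw [hcast, hrec, derivative_add, derivative_mul, derivative_X, T_derivative_eq_U]
    have hT' : ((n:ℤ) + 1 - 1) = (n:ℤ) := by ring
    rw [hT']
    simp only [eval_add, eval_mul, eval_X, eval_one, one_mul, eval_intCast]
    have hU : |(U ℝ (n:ℤ)).eval y| ≤ (n:ℝ)+1 := chebU_bound n y hy
    have hU' : |(derivative (U ℝ (n:ℤ))).eval y| ≤ (n:ℝ)^2 * ((n:ℝ)+1) := ih y hy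
    have hc : |(((n:ℤ)+1:ℤ):ℝ)| = (n:ℝ)+1 := by
      rw [show ((((n:ℤ)+1:ℤ)):ℝ) = (n:ℝ)+1 by push_cast; ring]
      rw [abs_of_nonneg (by positivity)]
    calc |(U ℝ (n:ℤ)).eval y + y * (derivative (U ℝ (n:ℤ))).eval y
          + (((n:ℤ)+1:ℤ):ℝ) * (U ℝ (n:ℤ)).eval y|
        ≤ |(U ℝ (n:ℤ)).eval y| + |y * (derivative (U ℝ (n:ℤ))).eval y|
          + |(((n:ℤ)+1:ℤ):ℝ) * (U ℝ (n:ℤ)).eval y| := abs_add_three _ _ _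
      _ ≤ ((n:ℝ)+1) + (n:ℝ)^2*((n:ℝ)+1) + ((n:ℝ)+1)*((n:ℝ)+1) := by
          rw [abs_mul, abs_mul, hc]
          have h2 : |y| * |(derivative (U ℝ (n:ℤ))).eval y| ≤ (n:ℝ)^2*((n:ℝ)+1) := by
            have := mul_le_mul hy1 hU' (abs_nonneg _) zero_le_one
            simpa using this
          have h3 : ((n:ℝ)+1) * |(U ℝ (n:ℤ)).eval y| ≤ ((n:ℝ)+1)*((n:ℝ)+1) := by
            nlinarith [abs_nonneg ((U ℝ (n:ℤ)).eval y), Nat.cast_nonneg (α := ℝ) n]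
          linarith
      _ ≤ (↑(n+1):ℝ)^2 * ((↑(n+1):ℝ)+1) := by push_cast; nlinarith [Nat.cast_nonneg (α := ℝ) n]

/-! ### Degree bounds for Chebyshev polynomials -/

lemma natDegree_chebT_le : ∀ n : ℕ, (T ℝ (n:ℤ)).natDegree ≤ n := by
  intro n
  induction n using Nat.strong_induction_on with
  | _ n ih =>
    match n with
    | 0 => simp [T_zero]
    | 1 => simpa [T_one] using natDegree_X_le
    | (k+2) =>
      rw [show ((k+2:ℕ):ℤ) = (k:ℤ)+2 by push_cast; ring, T_add_two ℝ (k:ℤ)]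
      refine (natDegree_sub_le _ _).trans (max_le ?_ ?_)
      · refine (natDegree_mul_le).trans ?_
        have h1 : (2 * X : Polynomial ℝ).natDegree ≤ 1 :=
          (natDegree_mul_le).trans (by simp [natDegree_X_le])
        have h2 : (T ℝ ((k:ℤ)+1)).natDegree ≤ k+1 := by
          have := ih (k+1) (by omega)
          rwa [show (((k+1:ℕ)):ℤ) = (k:ℤ)+1 by push_cast; ring] at this
        omega
      · exact (ih k (by omega)).trans (by omega)

lemma natDegree_chebU_le : ∀ n : ℕ, (U ℝ (n:ℤ)).natDegree ≤ n := by
  intro n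
  induction n using Nat.strong_induction_on with
  | _ n ih =>
    match n with
    | 0 => simp [U_zero]
    | 1 => refine le_trans (le_of_eq (congrArg _ (U_one ℝ))) ?_
           exact (natDegree_mul_le).trans (by simp [natDegree_X_le])
    | (k+2) =>
      rw [show ((k+2:ℕ):ℤ) = (k:ℤ)+2 by push_cast; ring, U_add_two ℝ (k:ℤ)]
      refine (natDegree_sub_le _ _).trans (max_le ?_ ?_)
      · refine (natDegree_mul_le).trans ?_
        have h1 : (2 * X : Polynomial ℝ).natDegree ≤ 1 :=
          (natDegree_mul_le).trans (by simp [natDegree_X_le])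
        have h2 : (U ℝ ((k:ℤ)+1)).natDegree ≤ k+1 := by
          have := ih (k+1) (by omega)
          rwa [show (((k+1:ℕ)):ℤ) = (k:ℤ)+1 by push_cast; ring] at this
        omega
      · exact (ih k (by omega)).trans (by omega)

/-! ### The polynomials `Pphi`, `DPol`, `RPol` -/

noncomputable def Pphi (q n : ℕ) : Polynomial ℝ :=
  C ((q:ℝ) ^ (-(n:ℝ)/2)) *
    (C (2/((q:ℝ)+1)) * (T ℝ (n:ℤ)).comp (C (2*Real.sqrt q)⁻¹ * X)
      + C (((q:ℝ)-1)/((q:ℝ)+1)) * (U ℝ (n:ℤ)).comp (C (2*Real.sqrt q)⁻¹ * X))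

noncomputable def DPol (q : ℕ) : Polynomial ℝ := C (2*((q:ℝ)+1)^2) - C 2 * X^2

noncomputable def RPol (q n : ℕ) : Polynomial ℝ :=
  -X * (Pphi q n).derivative * DPol q
    + (C (4*(q:ℝ)) - X^2) *
      ((Pphi q n).derivative.derivative * DPol q - (Pphi q n).derivative * (DPol q).derivative)

lemma Phi_eq_Pphi (q n : ℕ) : Phi q n = fun l => (Pphi q n).eval l := by
  funext l
  have harg : l / (2*Real.sqrt q) = (2*Real.sqrt q)⁻¹ * l := by rw [div_eq_inv_mul]
  simp only [Phi, Pphi, eval_mul, eval_add, eval_C, eval_comp, eval_X, harg]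

lemma deriv_Phi (q n : ℕ) : deriv (Phi q n) = fun l => ((Pphi q n).derivative).eval l := by
  rw [Phi_eq_Pphi]
  funext l
  exact Polynomial.deriv (Pphi q n)

lemma DPol_eval (q : ℕ) (x : ℝ) : (DPol q).eval x = 2*(((q:ℝ)+1)^2 - x^2) := by
  simp [DPol]; ring

lemma Psi_eq (q : ℕ) (l : ℝ) :
    Psi q l = ((q:ℝ)+1) * Real.sqrt (4*q - l^2) / (DPol q).eval l := by
  rw [DPol_eval, Psi]

lemma hasDeriv_g (q n : ℕ) (hq : 2 ≤ q) (x : ℝ)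
    (hx : x ∈ Ioo (-(2*Real.sqrt q)) (2*Real.sqrt q)) :
    HasDerivAt (fun l => Psi q l * (Pphi q n).derivative.eval l)
      ((((q:ℝ)+1) / (Real.sqrt (4*q - x^2) * ((DPol q).eval x)^2)) * (RPol q n).eval x) x := by
  have hqR : (2:ℝ) ≤ (q:ℝ) := by exact_mod_cast hq
  have hx2 : x^2 < 4*q := by
    have h1 : |x| < 2*Real.sqrt q := abs_lt.2 ⟨hx.1, hx.2⟩
    have h2 : (2*Real.sqrt q)^2 = 4*q := by
      rw [mul_pow, sq_sqrt (by positivity : (0:ℝ) ≤ q)]; ring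
    calc x^2 = |x|^2 := (sq_abs x).symm
      _ < (2*Real.sqrt q)^2 := by gcongr
      _ = 4*q := h2
  set s := Real.sqrt (4*q - x^2) with hs_def
  have hspos : 0 < s := Real.sqrt_pos.2 (by linarith)
  have hs2 : s^2 = 4*q - x^2 := Real.sq_sqrt (by linarith)
  have hdpos : 0 < (DPol q).eval x := by
    rw [DPol_eval]
    nlinarith [hx2, hqR]
  have h1 : HasDerivAt (fun l : ℝ => 4*(q:ℝ) - l^2) (-(2*x)) x := by
    simpa using (hasDerivAt_pow 2 x).const_sub (4*(q:ℝ))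
  have h2 : HasDerivAt (fun l : ℝ => Real.sqrt (4*q - l^2)) (-(2*x) / (2*s)) x :=
    h1.sqrt (ne_of_gt (by nlinarith : (0:ℝ) < 4*(q:ℝ) - x^2))
  have h3 : HasDerivAt (fun l : ℝ => ((q:ℝ)+1) * Real.sqrt (4*q - l^2))
      (((q:ℝ)+1) * (-(2*x) / (2*s))) x := h2.const_mul _
  have h4 : HasDerivAt (fun l : ℝ => (DPol q).eval l) ((DPol q).derivative.eval x) x :=
    (DPol q).hasDerivAt x
  have h5 := h3.fun_div h4 (ne_of_gt hdpos)
  have h6 := h5.fun_mul ((Pphi q n).derivative.hasDerivAt x)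
  have hfun : (fun l => ((q:ℝ)+1) * Real.sqrt (4*q - l^2) / (DPol q).eval l
      * (Pphi q n).derivative.eval l)
      = fun l => Psi q l * (Pphi q n).derivative.eval l := by
    funext l; rw [Psi_eq]
  rw [hfun] at h6
  refine h6.congr_deriv (Eq.symm ?_)
  have hRz : (RPol q n).eval x = -x * (Pphi q n).derivative.eval x * (DPol q).eval x
      + (4*q - x^2) * ((Pphi q n).derivative.derivative.eval x * (DPol q).eval x
        - (Pphi q n).derivative.eval x * (DPol q).derivative.eval x) := by
    simp [RPol]
  rw [hRz, ← hs2, Real.sqrt_sq hspos.le]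
  have hd := hdpos.ne'
  have hs := hspos.ne'
  field_simp
  ring

/-! ### Degree bound for `RPol` -/

lemma Pphi_derivative (q n : ℕ) :
    (Pphi q n).derivative =
      C ((q:ℝ) ^ (-(n:ℝ)/2)) *
        (C (2/((q:ℝ)+1)) * (C (2*Real.sqrt q)⁻¹ *
            (derivative (T ℝ (n:ℤ))).comp (C (2*Real.sqrt q)⁻¹ * X))
          + C (((q:ℝ)-1)/((q:ℝ)+1)) * (C (2*Real.sqrt q)⁻¹ *
            (derivative (U ℝ (n:ℤ))).comp (C (2*Real.sqrt q)⁻¹ * X))) := by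
  simp only [Pphi, derivative_mul, derivative_C, derivative_add, derivative_comp,
    derivative_X, mul_one, zero_mul, zero_add]

lemma natDegree_Pphi_le (q n : ℕ) : (Pphi q n).natDegree ≤ n := by
  have hL : (C (2*Real.sqrt q)⁻¹ * X : Polynomial ℝ).natDegree ≤ 1 :=
    natDegree_mul_le.trans (by rw [natDegree_C, natDegree_X])
  have hT : ((T ℝ (n:ℤ)).comp (C (2*Real.sqrt q)⁻¹ * X)).natDegree ≤ n :=
    natDegree_comp_le.trans (by
      calc (T ℝ (n:ℤ)).natDegree * (C (2*Real.sqrt q)⁻¹ * X : Polynomial ℝ).natDegree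
          ≤ n * 1 := Nat.mul_le_mul (natDegree_chebT_le n) hL
        _ = n := by omega)
  have hU : ((U ℝ (n:ℤ)).comp (C (2*Real.sqrt q)⁻¹ * X)).natDegree ≤ n :=
    natDegree_comp_le.trans (by
      calc (U ℝ (n:ℤ)).natDegree * (C (2*Real.sqrt q)⁻¹ * X : Polynomial ℝ).natDegree
          ≤ n * 1 := Nat.mul_le_mul (natDegree_chebU_le n) hL
        _ = n := by omega)
  refine natDegree_mul_le.trans ?_
  simp only [natDegree_C, zero_add]
  refine natDegree_add_le _ _ |>.trans (max_le ?_ ?_)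
  · exact natDegree_mul_le.trans (by simpa using hT)
  · exact natDegree_mul_le.trans (by simpa using hU)

lemma natDegree_DPol_le (q : ℕ) : (DPol q).natDegree ≤ 2 := by
  refine (natDegree_sub_le _ _).trans (max_le (by rw [natDegree_C]; omega) ?_)
  exact natDegree_mul_le.trans (by rw [natDegree_C, natDegree_X_pow])

lemma natDegree_RPol_le (q n : ℕ) (hn : 1 ≤ n) : (RPol q n).natDegree ≤ n + 2 := by
  have hpD : (Pphi q n).derivative.natDegree ≤ n - 1 :=
    (natDegree_derivative_le _).trans (Nat.sub_le_sub_right (natDegree_Pphi_le q n) 1)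
  have hDP := natDegree_DPol_le q
  have hDP' : (DPol q).derivative.natDegree ≤ 1 :=
    (natDegree_derivative_le _).trans (by omega)
  have hS2 : (C (4*(q:ℝ)) - X^2 : Polynomial ℝ).natDegree ≤ 2 :=
    (natDegree_sub_le _ _).trans (max_le (by rw [natDegree_C]; omega) (by rw [natDegree_X_pow]))
  have hXp : (-X * (Pphi q n).derivative * DPol q).natDegree ≤ n + 2 := by
    refine natDegree_mul_le.trans ?_
    have : (-X * (Pphi q n).derivative).natDegree ≤ 1 + (n-1) :=
      natDegree_mul_le.trans (by have := natDegree_Pphi_le q n; simp [natDegree_neg, natDegree_X]; omega)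
    omega
  rcases Nat.lt_or_ge n 2 with h2 | h2
  · have hn1 : n = 1 := by omega
    have hpD0 : (Pphi q n).derivative.natDegree = 0 := by omega
    obtain ⟨cc, hcc⟩ := natDegree_eq_zero.1 hpD0
    have hder0 : (Pphi q n).derivative.derivative = 0 := by
      rw [← hcc, derivative_C]
    refine (natDegree_add_le _ _).trans (max_le hXp ?_)
    rw [hder0]
    refine natDegree_mul_le.trans ?_
    have : ((0:Polynomial ℝ) * DPol q - (Pphi q n).derivative * (DPol q).derivative).natDegree
        ≤ 1 := by
      rw [zero_mul]
      refine (natDegree_sub_le _ _).trans (max_le (by simp) ?_)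
      exact natDegree_mul_le.trans (by omega)
    omega
  · have hpD' : (Pphi q n).derivative.derivative.natDegree ≤ n - 2 :=
      (natDegree_derivative_le _).trans (by omega)
    refine (natDegree_add_le _ _).trans (max_le hXp ?_)
    refine natDegree_mul_le.trans ?_
    have : ((Pphi q n).derivative.derivative * DPol q
        - (Pphi q n).derivative * (DPol q).derivative).natDegree ≤ n := by
      refine (natDegree_sub_le _ _).trans (max_le ?_ ?_)
      · exact natDegree_mul_le.trans (by omega)
      · exact natDegree_mul_le.trans (by omega)
    omega

/-! ### Bounds on `Ψ` and `Φ'` -/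

lemma pD_bound (q n : ℕ) (hq : 2 ≤ q) (x : ℝ)
    (hx : x ∈ Icc (-(2*Real.sqrt q)) (2*Real.sqrt q)) :
    |(Pphi q n).derivative.eval x| ≤
      (q:ℝ)^(-(n:ℝ)/2) * (2*Real.sqrt q)⁻¹ *
        ((2/((q:ℝ)+1)) * (n:ℝ)^2 + (((q:ℝ)-1)/((q:ℝ)+1)) * ((n:ℝ)^2*((n:ℝ)+1))) := by
  have hqR : (2:ℝ) ≤ (q:ℝ) := by exact_mod_cast hq
  have hsq : 0 < Real.sqrt q := Real.sqrt_pos.2 (by linarith)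
  set k : ℝ := (2*Real.sqrt q)⁻¹ with hk
  have hkpos : 0 < k := by positivity
  set y : ℝ := k * x with hy_def
  have hy : y ∈ Icc (-1:ℝ) 1 := by
    have hxabs : |x| ≤ 2*Real.sqrt q := abs_le.2 ⟨hx.1, hx.2⟩
    have : |y| ≤ 1 := by
      rw [hy_def, abs_mul, abs_of_pos hkpos, hk]
      calc (2*Real.sqrt q)⁻¹ * |x| ≤ (2*Real.sqrt q)⁻¹ * (2*Real.sqrt q) := by gcongr
        _ = 1 := by field_simp
    exact ⟨neg_le_of_abs_le this, le_of_abs_le this⟩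
  have hc0 : (0:ℝ) < (q:ℝ)^(-(n:ℝ)/2) := Real.rpow_pos_of_pos (by linarith) _
  have hα : (0:ℝ) ≤ 2/((q:ℝ)+1) := by positivity
  have hβ : (0:ℝ) ≤ ((q:ℝ)-1)/((q:ℝ)+1) := by
    apply div_nonneg <;> linarith
  rw [Pphi_derivative]
  simp only [eval_mul, eval_add, eval_C, eval_comp, eval_X]
  simp only [← hk, ← hy_def]
  rw [abs_mul, abs_of_pos hc0]
  have hT := chebT_deriv_bound n y hy
  have hU := chebU_deriv_bound n y hy
  have hstep : |2/((q:ℝ)+1) * (k * (derivative (T ℝ (n:ℤ))).eval y)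
        + ((q:ℝ)-1)/((q:ℝ)+1) * (k * (derivative (U ℝ (n:ℤ))).eval y)|
      ≤ k * ((2/((q:ℝ)+1)) * (n:ℝ)^2 + (((q:ℝ)-1)/((q:ℝ)+1)) * ((n:ℝ)^2*((n:ℝ)+1))) := by
    refine (abs_add_le _ _).trans ?_
    rw [abs_mul, abs_mul, abs_mul, abs_mul, abs_of_pos hkpos,
      abs_of_nonneg hα, abs_of_nonneg hβ]
    have h1 : 2/((q:ℝ)+1) * (k * |(derivative (T ℝ (n:ℤ))).eval y|)
        ≤ 2/((q:ℝ)+1) * (k * (n:ℝ)^2) := by gcongr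
    have h2 : ((q:ℝ)-1)/((q:ℝ)+1) * (k * |(derivative (U ℝ (n:ℤ))).eval y|)
        ≤ ((q:ℝ)-1)/((q:ℝ)+1) * (k * ((n:ℝ)^2*((n:ℝ)+1))) := by gcongr
    nlinarith [h1, h2]
  calc (q:ℝ)^(-(n:ℝ)/2) * |2/((q:ℝ)+1) * (k * (derivative (T ℝ (n:ℤ))).eval y)
        + ((q:ℝ)-1)/((q:ℝ)+1) * (k * (derivative (U ℝ (n:ℤ))).eval y)|
      ≤ (q:ℝ)^(-(n:ℝ)/2) * (k * ((2/((q:ℝ)+1)) * (n:ℝ)^2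
        + (((q:ℝ)-1)/((q:ℝ)+1)) * ((n:ℝ)^2*((n:ℝ)+1)))) := by gcongr
    _ = (q:ℝ)^(-(n:ℝ)/2) * k * ((2/((q:ℝ)+1)) * (n:ℝ)^2
        + (((q:ℝ)-1)/((q:ℝ)+1)) * ((n:ℝ)^2*((n:ℝ)+1))) := by ring

lemma Psi_bound (q : ℕ) (hq : 2 ≤ q) (x : ℝ)
    (hx : x ∈ Icc (-(2*Real.sqrt q)) (2*Real.sqrt q)) :
    |Psi q x| ≤ ((q:ℝ)+1)*(2*Real.sqrt q)/(2*((q:ℝ)-1)^2) := by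
  have hqR : (2:ℝ) ≤ (q:ℝ) := by exact_mod_cast hq
  have hsq : 0 < Real.sqrt q := Real.sqrt_pos.2 (by linarith)
  have hx2 : x^2 ≤ 4*q := by
    have h1 : |x| ≤ 2*Real.sqrt q := abs_le.2 ⟨hx.1, hx.2⟩
    have h2 : (2*Real.sqrt q)^2 = 4*q := by
      rw [mul_pow, sq_sqrt (by positivity : (0:ℝ) ≤ q)]; ring
    calc x^2 = |x|^2 := (sq_abs x).symm
      _ ≤ (2*Real.sqrt q)^2 := by gcongr
      _ = 4*q := h2
  have hsnum : Real.sqrt (4*q - x^2) ≤ 2*Real.sqrt q := by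
    have h4 : Real.sqrt (4*(q:ℝ)) = 2*Real.sqrt q := by
      rw [show (4:ℝ)*(q:ℝ) = (2*Real.sqrt q)^2 by
        rw [mul_pow, sq_sqrt (by positivity : (0:ℝ) ≤ q)]; ring]
      exact Real.sqrt_sq (by positivity)
    calc Real.sqrt (4*q - x^2) ≤ Real.sqrt (4*q) := by
          apply Real.sqrt_le_sqrt; nlinarith [sq_nonneg x]
      _ = 2*Real.sqrt q := h4
  have hden1 : (0:ℝ) < 2*((q:ℝ)-1)^2 := by nlinarith
  have hden2 : 2*((q:ℝ)-1)^2 ≤ 2*(((q:ℝ)+1)^2 - x^2) := by nlinarith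
  have hnum : ((q:ℝ)+1) * Real.sqrt (4*q - x^2) ≤ ((q:ℝ)+1)*(2*Real.sqrt q) := by
    have hq1 : (0:ℝ) ≤ (q:ℝ)+1 := by linarith
    exact mul_le_mul_of_nonneg_left hsnum hq1
  have hnum0 : (0:ℝ) ≤ ((q:ℝ)+1) * Real.sqrt (4*q - x^2) := by positivity
  rw [Psi, abs_of_nonneg (div_nonneg hnum0 (by linarith))]
  exact div_le_div₀ (by positivity) hnum hden1 hden2

end Aux

/-- `λ ↦ Ψ(λ)Φ_n'(λ)` is differentiable on `(−2√q, 2√q)` and its total variation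
satisfies `∫_{−2√q}^{2√q} |(ΨΦ_n')'(λ)| dλ ≤ (n+2)n² q^{−n/2}(2+(n+1)(q−1))/(q−1)²`. -/
theorem PsiPhi_deriv_total_variation (q n : ℕ) (hq : 2 ≤ q) (hn : 1 ≤ n) :
    (∀ l ∈ Ioo (-(2*Real.sqrt q)) (2*Real.sqrt q),
      DifferentiableAt ℝ (fun l => Psi q l * deriv (Phi q n) l) l) ∧
    (∫ l in (-(2*Real.sqrt q))..(2*Real.sqrt q),
        |deriv (fun l => Psi q l * deriv (Phi q n) l) l|)
      ≤ ((n:ℝ)+2) * (n:ℝ)^2 * (q:ℝ) ^ (-(n:ℝ)/2) * (2 + ((n:ℝ)+1)*((q:ℝ)-1))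
          / ((q:ℝ)-1)^2 := by
  have hqR : (2:ℝ) ≤ (q:ℝ) := by exact_mod_cast hq
  have hsq : 0 < Real.sqrt q := Real.sqrt_pos.2 (by linarith)
  have hab : -(2*Real.sqrt q) ≤ 2*Real.sqrt q := by linarith
  have hfun : (fun l => Psi q l * deriv (Phi q n) l)
      = (fun l => Psi q l * (Pphi q n).derivative.eval l) := by
    funext l; rw [deriv_Phi]
  set g : ℝ → ℝ := fun l => Psi q l * (Pphi q n).derivative.eval l with hg
  -- continuity of g on the closed interval
  have hcont : ContinuousOn g (Icc (-(2*Real.sqrt q)) (2*Real.sqrt q)) := by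
    apply ContinuousOn.mul ?_ ((Pphi q n).derivative.continuous_aeval).continuousOn
    have h1 : Continuous (fun l : ℝ => ((q:ℝ)+1) * Real.sqrt (4*(q:ℝ) - l^2)) :=
      continuous_const.mul ((continuous_const.sub (continuous_pow 2)).sqrt)
    have h2 : Continuous (fun l : ℝ => 2*(((q:ℝ)+1)^2 - l^2)) :=
      continuous_const.mul (continuous_const.sub (continuous_pow 2))
    have hne : ∀ x ∈ Icc (-(2*Real.sqrt q)) (2*Real.sqrt q),
        2*(((q:ℝ)+1)^2 - x^2) ≠ 0 := by
      intro x hx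
      have hx2 : x^2 ≤ 4*q := by
        have h1' : |x| ≤ 2*Real.sqrt q := abs_le.2 ⟨hx.1, hx.2⟩
        have h2' : (2*Real.sqrt q)^2 = 4*q := by
          rw [mul_pow, sq_sqrt (by positivity : (0:ℝ) ≤ q)]; ring
        calc x^2 = |x|^2 := (sq_abs x).symm
          _ ≤ (2*Real.sqrt q)^2 := by gcongr
          _ = 4*q := h2'
      nlinarith
    exact ContinuousOn.div₀ h1.continuousOn h2.continuousOn hne
  -- differentiability of g on the open interval
  have hdiff : ∀ x ∈ Ioo (-(2*Real.sqrt q)) (2*Real.sqrt q), DifferentiableAt ℝ g x :=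
    fun x hx => (hasDeriv_g q n hq x hx).differentiableAt
  -- sign structure of deriv g
  have hsign : ∀ x ∈ Ioo (-(2*Real.sqrt q)) (2*Real.sqrt q),
      ∃ c : ℝ, 0 < c ∧ deriv g x = c * (RPol q n).eval x := by
    intro x hx
    have hx2 : x^2 < 4*q := by
      have h1' : |x| < 2*Real.sqrt q := abs_lt.2 ⟨hx.1, hx.2⟩
      have h2' : (2*Real.sqrt q)^2 = 4*q := by
        rw [mul_pow, sq_sqrt (by positivity : (0:ℝ) ≤ q)]; ring
      calc x^2 = |x|^2 := (sq_abs x).symm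
        _ < (2*Real.sqrt q)^2 := by gcongr
        _ = 4*q := h2'
    have hspos : 0 < Real.sqrt (4*q - x^2) := Real.sqrt_pos.2 (by linarith)
    have hdpos : 0 < (DPol q).eval x := by
      rw [DPol_eval]; nlinarith
    refine ⟨((q:ℝ)+1) / (Real.sqrt (4*q - x^2) * ((DPol q).eval x)^2), by positivity, ?_⟩
    exact (hasDeriv_g q n hq x hx).deriv
  -- endpoints vanish
  have hsqb : Real.sqrt (4*(q:ℝ) - (2*Real.sqrt q)^2) = 0 := by
    rw [show 4*(q:ℝ) - (2*Real.sqrt q)^2 = 0 by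
      rw [mul_pow, sq_sqrt (by positivity : (0:ℝ) ≤ q)]; ring]
    exact Real.sqrt_zero
  have hga : g (-(2*Real.sqrt q)) = 0 := by
    have h0 : (-(2*Real.sqrt q))^2 = (2*Real.sqrt q)^2 := by ring
    simp only [hg, Psi, h0, hsqb, mul_zero, zero_div, zero_mul]
  have hgb : g (2*Real.sqrt q) = 0 := by
    simp only [hg, Psi, hsqb, mul_zero, zero_div, zero_mul]
  -- the bound constants
  set Mψ : ℝ := ((q:ℝ)+1)*(2*Real.sqrt q)/(2*((q:ℝ)-1)^2) with hMψ
  set Mφ : ℝ := (q:ℝ)^(-(n:ℝ)/2) * (2*Real.sqrt q)⁻¹ *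
      ((2/((q:ℝ)+1)) * (n:ℝ)^2 + (((q:ℝ)-1)/((q:ℝ)+1)) * ((n:ℝ)^2*((n:ℝ)+1))) with hMφ
  have hMψ0 : 0 ≤ Mψ := by
    rw [hMψ]; positivity
  have hMφ0 : 0 ≤ Mφ := by
    have hβ : (0:ℝ) ≤ ((q:ℝ)-1)/((q:ℝ)+1) := by apply div_nonneg <;> linarith
    rw [hMφ]
    have h1 : (0:ℝ) ≤ (2/((q:ℝ)+1)) * (n:ℝ)^2 := by positivity
    have h2 : (0:ℝ) ≤ (((q:ℝ)-1)/((q:ℝ)+1)) * ((n:ℝ)^2*((n:ℝ)+1)) := by positivity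
    positivity
  have hM : ∀ x ∈ Icc (-(2*Real.sqrt q)) (2*Real.sqrt q), |g x| ≤ Mψ * Mφ := by
    intro x hx
    rw [hg]
    simp only
    rw [abs_mul]
    exact mul_le_mul (Psi_bound q hq x hx) (pD_bound q n hq x hx) (abs_nonneg _) hMψ0
  -- final arithmetic identity
  have hfinal : 2 * (Mψ * Mφ) * ((n:ℝ)+2)
      = ((n:ℝ)+2) * (n:ℝ)^2 * (q:ℝ) ^ (-(n:ℝ)/2) * (2 + ((n:ℝ)+1)*((q:ℝ)-1))
          / ((q:ℝ)-1)^2 := by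
    rw [hMψ, hMφ]
    have hs : Real.sqrt q ≠ 0 := ne_of_gt hsq
    have h1 : ((q:ℝ)+1) ≠ 0 := by linarith
    have h2 : ((q:ℝ)-1) ≠ 0 := by intro h; nlinarith [h]
    field_simp
  constructor
  · intro l hl
    rw [hfun]
    exact hdiff l hl
  rw [hfun]
  by_cases hR : RPol q n = 0
  · -- degenerate case: the polynomial is zero, so the derivative vanishes
    have hz : ∀ x ∈ Ioo (-(2*Real.sqrt q)) (2*Real.sqrt q), deriv g x = 0 := by
      intro x hx
      obtain ⟨c, _, he⟩ := hsign x hx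
      rw [he, hR]
      simp
    have hae : ∀ᵐ (x:ℝ), x ∈ Set.uIoc (-(2*Real.sqrt q)) (2*Real.sqrt q) → |deriv g x| = 0 := by
      have hbm : ∀ᵐ (x:ℝ), x ≠ 2*Real.sqrt q := by
        refine MeasureTheory.mem_ae_iff.2 ?_
        have : {x : ℝ | x ≠ 2*Real.sqrt q}ᶜ = {2*Real.sqrt q} := by ext z; simp
        rw [this]
        exact Real.volume_singleton
      filter_upwards [hbm] with x hxb hxI
      rw [Set.uIoc_of_le hab] at hxI
      have hxoo : x ∈ Ioo (-(2*Real.sqrt q)) (2*Real.sqrt q) :=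
        ⟨hxI.1, lt_of_le_of_ne hxI.2 hxb⟩
      rw [hz x hxoo, abs_zero]
    calc (∫ l in (-(2*Real.sqrt q))..(2*Real.sqrt q), |deriv g l|)
        = ∫ l in (-(2*Real.sqrt q))..(2*Real.sqrt q), (0:ℝ) :=
          intervalIntegral.integral_congr_ae hae
      _ = 0 := intervalIntegral.integral_zero
      _ ≤ _ := by
          rw [← hfinal]
          positivity
  · -- main case
    obtain ⟨II, hbound⟩ := tv_key g (RPol q n) hR (Mψ * Mφ) (2*Real.sqrt q)
      (((RPol q n).roots.toFinset.filter
        (fun x => x ∈ Ioo (-(2*Real.sqrt q)) (2*Real.sqrt q))).card)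
      (-(2*Real.sqrt q)) hab hcont hdiff hsign hM rfl
    have hcard : (((RPol q n).roots.toFinset.filter
        (fun x => x ∈ Ioo (-(2*Real.sqrt q)) (2*Real.sqrt q))).card : ℝ) ≤ (n:ℝ) + 2 := by
      have h1 : ((RPol q n).roots.toFinset.filter
          (fun x => x ∈ Ioo (-(2*Real.sqrt q)) (2*Real.sqrt q))).card ≤ n + 2 := by
        calc _ ≤ (RPol q n).roots.toFinset.card := Finset.card_filter_le _ _
          _ ≤ Multiset.card (RPol q n).roots := (RPol q n).roots.toFinset_card_le
          _ ≤ (RPol q n).natDegree := (RPol q n).card_roots'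
          _ ≤ n + 2 := natDegree_RPol_le q n hn
      exact_mod_cast h1
    rw [hga, hgb, abs_zero] at hbound
    calc (∫ l in (-(2*Real.sqrt q))..(2*Real.sqrt q), |deriv g l|)
        ≤ 0 + 0 + 2 * (Mψ * Mφ) * (((RPol q n).roots.toFinset.filter
            (fun x => x ∈ Ioo (-(2*Real.sqrt q)) (2*Real.sqrt q))).card : ℝ) := hbound
      _ ≤ 2 * (Mψ * Mφ) * ((n:ℝ)+2) := by
          rw [zero_add, zero_add]
          have h0 : (0:ℝ) ≤ 2 * (Mψ * Mφ) := by positivity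
          exact mul_le_mul_of_nonneg_left hcard h0
      _ = _ := hfinal
end

section
/- Let a < b be reals, let p : [a,b] → ℝ be three times continuously differentiable and q : [a,b] → ℝ continuously differentiable, with p'(a) = 0, p''(a) ≠ 0, and set ε = sgn p''(a). Then the limit as x → a⁺ of Q_{1,1}(x) := q(x)/(ε p'(x)) − q(a)/(√(2ε p''(a)) · √(ε(p(x) − p(a)))) exists and equals ε( q'(a)/p''(a) − q(a) p'''(a)/(3 p''(a)²) ). -/
open Set Real Filter

open Topology


private lemma aux_mvt1 {a b : ℝ} {f f' : ℝ → ℝ}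
    (hf : ∀ x ∈ Icc a b, HasDerivWithinAt f (f' x) (Icc a b) x)
    {x : ℝ} (hx : x ∈ Ioc a b) :
    ∃ c ∈ Ioo a x, f x - f a = f' c * (x - a) := by
  have hfc0 : ContinuousOn f (Icc a b) := fun y hy => (hf y hy).continuousWithinAt
  have hcont : ContinuousOn f (Icc a x) := hfc0.mono (Icc_subset_Icc le_rfl hx.2)
  have hder : ∀ y ∈ Ioo a x, HasDerivAt f (f' y) y := fun y hy =>
    (hf y ⟨hy.1.le, (hy.2.le.trans hx.2)⟩).hasDerivAt
      (Icc_mem_nhds hy.1 (hy.2.trans_le hx.2))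
  obtain ⟨c, hc, hc'⟩ := exists_hasDerivAt_eq_slope f f' hx.1 hcont hder
  have hxa : x - a ≠ 0 := sub_ne_zero.mpr (ne_of_gt hx.1)
  exact ⟨c, hc, by rw [hc', div_mul_cancel₀ _ hxa]⟩

private lemma aux_mvt2 {a b : ℝ} {f f' f'' : ℝ → ℝ}
    (hf : ∀ x ∈ Icc a b, HasDerivWithinAt f (f' x) (Icc a b) x)
    (hf' : ∀ x ∈ Icc a b, HasDerivWithinAt f' (f'' x) (Icc a b) x)
    {x : ℝ} (hx : x ∈ Ioc a b) :
    ∃ c ∈ Ioo a x, f x = f a + f' a * (x - a) + f'' c / 2 * (x - a) ^ 2 := by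
  set F : ℝ → ℝ := fun y => f y - f a - f' a * (y - a) with hF
  have hfc0 : ContinuousOn f (Icc a b) := fun y hy => (hf y hy).continuousWithinAt
  have hFc : ContinuousOn F (Icc a x) :=
    ((hfc0.mono (Icc_subset_Icc le_rfl hx.2)).sub continuousOn_const).sub
      (continuousOn_const.mul ((continuousOn_id.sub continuousOn_const)))
  have hFd : ∀ y ∈ Ioo a x, HasDerivAt F (f' y - f' a) y := by
    intro y hy
    have h1 : HasDerivAt f (f' y) y :=
      (hf y ⟨hy.1.le, hy.2.le.trans hx.2⟩).hasDerivAt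
        (Icc_mem_nhds hy.1 (hy.2.trans_le hx.2))
    have h2 : HasDerivAt (fun y => f a + f' a * (y - a)) (f' a) y := by
      simpa using (((hasDerivAt_id y).sub_const a).const_mul (f' a)).const_add (f a)
    simpa [hF, sub_sub] using h1.fun_sub h2
  have hGc : ContinuousOn (fun y : ℝ => (y - a) ^ 2) (Icc a x) :=
    ((continuousOn_id.sub continuousOn_const).pow 2)
  have hGd : ∀ y ∈ Ioo a x, HasDerivAt (fun y : ℝ => (y - a) ^ 2) (2 * (y - a)) y := by
    intro y _
    simpa [mul_comm] using ((hasDerivAt_id y).sub_const a).fun_pow 2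
  obtain ⟨c, hc, hc'⟩ :=
    exists_ratio_hasDerivAt_eq_ratio_slope F (fun y => f' y - f' a) hx.1 hFc hFd
      (fun y : ℝ => (y - a) ^ 2) (fun y => 2 * (y - a)) hGc hGd
  -- hc' : ((x-a)^2 - 0) * (f' c - f' a) = (F x - F a) * (2*(c-a))
  obtain ⟨d, hd, hd'⟩ := aux_mvt1 hf' (show c ∈ Ioc a b from ⟨hc.1, hc.2.le.trans hx.2⟩)
  have hca : c - a ≠ 0 := sub_ne_zero.mpr (ne_of_gt hc.1)
  refine ⟨d, ⟨hd.1, hd.2.trans hc.2⟩, ?_⟩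
  have key : (f x) * (c - a) = (f a + f' a * (x - a) + f'' d / 2 * (x - a) ^ 2) * (c - a) := by
    have hFa : F a = 0 := by simp [hF]
    rw [hFa] at hc'
    -- hc' with F x = f x - f a - f' a * (x-a)
    simp only [hF] at hc'
    linear_combination (-1/2 : ℝ) * hc' + (x - a) ^ 2 / 2 * hd'
  exact mul_right_cancel₀ hca key

private lemma aux_mvt3 {a b : ℝ} {f f' f'' f''' : ℝ → ℝ}
    (hf : ∀ x ∈ Icc a b, HasDerivWithinAt f (f' x) (Icc a b) x)
    (hf' : ∀ x ∈ Icc a b, HasDerivWithinAt f' (f'' x) (Icc a b) x)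
    (hf'' : ∀ x ∈ Icc a b, HasDerivWithinAt f'' (f''' x) (Icc a b) x)
    {x : ℝ} (hx : x ∈ Ioc a b) :
    ∃ c ∈ Ioo a x, f x = f a + f' a * (x - a) + f'' a / 2 * (x - a) ^ 2
      + f''' c / 6 * (x - a) ^ 3 := by
  set F : ℝ → ℝ := fun y => f y - f a - f' a * (y - a) - f'' a / 2 * (y - a) ^ 2 with hF
  have hfc0 : ContinuousOn f (Icc a b) := fun y hy => (hf y hy).continuousWithinAt
  have hFc : ContinuousOn F (Icc a x) :=
    (((hfc0.mono (Icc_subset_Icc le_rfl hx.2)).sub continuousOn_const).sub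
      (continuousOn_const.mul (continuousOn_id.sub continuousOn_const))).sub
      (continuousOn_const.mul ((continuousOn_id.sub continuousOn_const).pow 2))
  have hFd : ∀ y ∈ Ioo a x, HasDerivAt F (f' y - f' a - f'' a * (y - a)) y := by
    intro y hy
    have h1 : HasDerivAt f (f' y) y :=
      (hf y ⟨hy.1.le, hy.2.le.trans hx.2⟩).hasDerivAt
        (Icc_mem_nhds hy.1 (hy.2.trans_le hx.2))
    have h2 : HasDerivAt (fun y => f' a * (y - a)) (f' a) y := by
      simpa using ((hasDerivAt_id y).sub_const a).const_mul (f' a)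
    have h3' := (((hasDerivAt_id y).sub_const a).fun_pow 2).const_mul (f'' a / 2)
    simp only [id_eq] at h3'
    have h3 : HasDerivAt (fun y : ℝ => f'' a / 2 * (y - a) ^ 2) (f'' a * (y - a)) y := by
      refine h3'.congr_deriv ?_
      ring
    simpa [hF] using (h1.sub_const (f a)).fun_sub h2 |>.fun_sub h3
  have hGc : ContinuousOn (fun y : ℝ => (y - a) ^ 3) (Icc a x) :=
    ((continuousOn_id.sub continuousOn_const).pow 3)
  have hGd : ∀ y ∈ Ioo a x, HasDerivAt (fun y : ℝ => (y - a) ^ 3) (3 * (y - a) ^ 2) y := by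
    intro y _
    simpa [mul_comm] using ((hasDerivAt_id y).sub_const a).fun_pow 3
  obtain ⟨c, hc, hc'⟩ :=
    exists_ratio_hasDerivAt_eq_ratio_slope F (fun y => f' y - f' a - f'' a * (y - a)) hx.1 hFc hFd
      (fun y : ℝ => (y - a) ^ 3) (fun y => 3 * (y - a) ^ 2) hGc hGd
  obtain ⟨d, hd, hd'⟩ := aux_mvt2 hf' hf'' (show c ∈ Ioc a b from ⟨hc.1, hc.2.le.trans hx.2⟩)
  have hca : c - a ≠ 0 := sub_ne_zero.mpr (ne_of_gt hc.1)
  refine ⟨d, ⟨hd.1, hd.2.trans hc.2⟩, ?_⟩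
  have key : (f x) * (3 * (c - a) ^ 2) = (f a + f' a * (x - a) + f'' a / 2 * (x - a) ^ 2
      + f''' d / 6 * (x - a) ^ 3) * (3 * (c - a) ^ 2) := by
    have hFa : F a = 0 := by simp [hF]
    rw [hFa] at hc'
    simp only [hF] at hc'
    linear_combination (-1 : ℝ) * hc' + (x - a) ^ 3 * hd'
  have h3 : (3 : ℝ) * (c - a) ^ 2 ≠ 0 := by positivity
  exact mul_right_cancel₀ h3 key

set_option maxHeartbeats 1000000 in
/-- The limit as `x → a⁺` of
`Q_{1,1}(x) = q(x)/(ε p'(x)) − q(a)/(√(2ε p''(a)) √(ε(p(x) − p(a))))`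
exists and equals `ε( q'(a)/p''(a) − q(a)p'''(a)/(3 p''(a)²) )`, where `ε = sgn p''(a)`.
Here `p` is `C³` on `[a,b]` and `q` is `C¹` on `[a,b]`, encoded through the derivative
functions `p', p'', p''', q'` (with `p'''` and `q'` continuous on `[a,b]`). -/
theorem Q11_limit_at_critical_point (a b : ℝ) (hab : a < b)
    (p p' p'' p''' q q' : ℝ → ℝ)
    (hp : ∀ x ∈ Icc a b, HasDerivWithinAt p (p' x) (Icc a b) x)
    (hp' : ∀ x ∈ Icc a b, HasDerivWithinAt p' (p'' x) (Icc a b) x)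
    (hp'' : ∀ x ∈ Icc a b, HasDerivWithinAt p'' (p''' x) (Icc a b) x)
    (hp'''c : ContinuousOn p''' (Icc a b))
    (hq : ∀ x ∈ Icc a b, HasDerivWithinAt q (q' x) (Icc a b) x)
    (hq'c : ContinuousOn q' (Icc a b))
    (hcrit : p' a = 0) (hnd : p'' a ≠ 0)
    (ε : ℝ) (hε : ε = Real.sign (p'' a)) :
    Tendsto (fun x =>
        q x / (ε * p' x)
          - q a / (Real.sqrt (2 * (ε * p'' a)) * Real.sqrt (ε * (p x - p a))))
      (nhdsWithin a (Ioi a))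
      (nhds (ε * (q' a / p'' a - q a * p''' a / (3 * (p'' a)^2)))) := by
  have hs : a ∈ Icc a b := ⟨le_rfl, hab.le⟩
  obtain ⟨hε2, hEpos⟩ : ε * ε = 1 ∧ 0 < ε * p'' a := by
    rcases hnd.lt_or_gt with h | h
    · rw [hε, Real.sign_of_neg h]; constructor
      · norm_num
      · linarith
    · rw [hε, Real.sign_of_pos h]; constructor
      · norm_num
      · linarith
  set E := ε * p'' a with hEdef
  have hE0 : E ≠ 0 := ne_of_gt hEpos
  -- Taylor expansion data via choice
  have T1 : ∀ x : ℝ, ∃ c, x ∈ Ioc a b →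
      c ∈ Ioo a x ∧ q x = q a + q' c * (x - a) := by
    intro x
    by_cases h : x ∈ Ioc a b
    · obtain ⟨c, hc, hceq⟩ := aux_mvt1 hq h
      exact ⟨c, fun _ => ⟨hc, by linarith⟩⟩
    · exact ⟨a, fun h' => absurd h' h⟩
  have T2 : ∀ x : ℝ, ∃ c, x ∈ Ioc a b →
      c ∈ Ioo a x ∧ p' x = p'' a * (x - a) + p''' c / 2 * (x - a) ^ 2 := by
    intro x
    by_cases h : x ∈ Ioc a b
    · obtain ⟨c, hc, hceq⟩ := aux_mvt2 hp' hp'' h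
      exact ⟨c, fun _ => ⟨hc, by rw [hceq, hcrit]; ring⟩⟩
    · exact ⟨a, fun h' => absurd h' h⟩
  have T3 : ∀ x : ℝ, ∃ c, x ∈ Ioc a b →
      c ∈ Ioo a x ∧ p x - p a = p'' a / 2 * (x - a) ^ 2 + p''' c / 6 * (x - a) ^ 3 := by
    intro x
    by_cases h : x ∈ Ioc a b
    · obtain ⟨c, hc, hceq⟩ := aux_mvt3 hp hp' hp'' h
      exact ⟨c, fun _ => ⟨hc, by rw [hceq, hcrit]; ring⟩⟩
    · exact ⟨a, fun h' => absurd h' h⟩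
  choose c3 hc3 using T1
  choose c1 hc1 using T2
  choose c2 hc2 using T3
  have htIoc : Ioc a b ∈ 𝓝[>] a := Ioc_mem_nhdsGT hab
  -- generic composition-limit fact
  have keyT : ∀ (g c : ℝ → ℝ), ContinuousOn g (Icc a b) →
      (∀ x ∈ Ioc a b, c x ∈ Ioo a x) →
      Tendsto (fun x => g (c x)) (𝓝[>] a) (𝓝 (g a)) := by
    intro g c hg hc
    have h1 : Tendsto c (𝓝[>] a) (𝓝 a) := by
      apply tendsto_of_tendsto_of_tendsto_of_le_of_le' tendsto_const_nhds
        (tendsto_id.mono_left nhdsWithin_le_nhds)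
      · filter_upwards [htIoc] with x hx; exact (hc x hx).1.le
      · filter_upwards [htIoc] with x hx; exact (hc x hx).2.le
    have h2 : Tendsto c (𝓝[>] a) (𝓝[Icc a b] a) := by
      apply tendsto_nhdsWithin_of_tendsto_nhds_of_eventually_within _ h1
      filter_upwards [htIoc] with x hx
      exact ⟨(hc x hx).1.le, (hc x hx).2.le.trans hx.2⟩
    have := Filter.Tendsto.comp (hg a hs) h2
    exact this
  have hR1 : Tendsto (fun x => p''' (c1 x)) (𝓝[>] a) (𝓝 (p''' a)) :=
    keyT _ _ hp'''c (fun x hx => (hc1 x hx).1)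
  have hR2 : Tendsto (fun x => p''' (c2 x)) (𝓝[>] a) (𝓝 (p''' a)) :=
    keyT _ _ hp'''c (fun x hx => (hc2 x hx).1)
  have hS : Tendsto (fun x => q' (c3 x)) (𝓝[>] a) (𝓝 (q' a)) :=
    keyT _ _ hq'c (fun x hx => (hc3 x hx).1)
  have ht0 : Tendsto (fun x : ℝ => x - a) (𝓝[>] a) (𝓝 0) := by
    have := ((continuous_sub_right a).tendsto a).mono_left (nhdsWithin_le_nhds (s := Ioi a))
    simpa using this
  set u : ℝ → ℝ := fun x => 2 * ε * (p''' (c2 x) / 6) * (x - a) / E with hudef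
  set v : ℝ → ℝ := fun x => ε * (p''' (c1 x) / 2) * (x - a) / E with hvdef
  set w : ℝ → ℝ := fun x => Real.sqrt (1 + u x) with hwdef
  have hu0 : Tendsto u (𝓝[>] a) (𝓝 0) := by
    have := (((tendsto_const_nhds (x := 2 * ε) (f := 𝓝[>] a)).mul
      (hR2.div_const 6)).mul ht0).div_const E
    simpa [hudef] using this
  have hv0 : Tendsto v (𝓝[>] a) (𝓝 0) := by
    have := (((tendsto_const_nhds (x := ε) (f := 𝓝[>] a)).mul
      (hR1.div_const 2)).mul ht0).div_const E
    simpa [hvdef] using this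
  have hw1 : Tendsto w (𝓝[>] a) (𝓝 1) := by
    have h1 : Tendsto (fun x => 1 + u x) (𝓝[>] a) (𝓝 1) := by
      have := (tendsto_const_nhds (x := (1:ℝ)) (f := 𝓝[>] a)).add hu0
      simpa using this
    have := (Real.continuous_sqrt.tendsto (1 : ℝ)).comp h1
    rw [Real.sqrt_one] at this
    exact this
  -- the auxiliary expression and its limit
  set G : ℝ → ℝ := fun x =>
    (q a * (2 * ε * (p''' (c2 x) / 6) / E) / (w x + 1) + q' (c3 x) * w x
      - q a * (ε * (p''' (c1 x) / 2) / E)) / (E * (1 + v x) * w x) with hGdef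
  have hn : Tendsto (fun x => q a * (2 * ε * (p''' (c2 x) / 6) / E) / (w x + 1)
      + q' (c3 x) * w x - q a * (ε * (p''' (c1 x) / 2) / E)) (𝓝[>] a)
      (𝓝 (q a * (2 * ε * (p''' a / 6) / E) / (1 + 1) + q' a * 1
        - q a * (ε * (p''' a / 2) / E))) := by
    refine Tendsto.sub (Tendsto.add (Tendsto.div ?_ (hw1.add tendsto_const_nhds) ?_)
      (hS.mul hw1)) ?_
    · exact tendsto_const_nhds.mul (((tendsto_const_nhds (x := 2*ε)).mul
        (hR2.div_const 6)).div_const E)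
    · norm_num
    · exact tendsto_const_nhds.mul (((tendsto_const_nhds (x := ε)).mul
        (hR1.div_const 2)).div_const E)
  have hd : Tendsto (fun x => E * (1 + v x) * w x) (𝓝[>] a) (𝓝 (E * (1 + 0) * 1)) :=
    (tendsto_const_nhds.mul (tendsto_const_nhds.add hv0)).mul hw1
  have hGlim0 := hn.div hd (by simpa using hE0)
  have hval : (q a * (2 * ε * (p''' a / 6) / E) / (1 + 1) + q' a * 1
      - q a * (ε * (p''' a / 2) / E)) / (E * (1 + 0) * 1)
      = ε * (q' a / p'' a - q a * p''' a / (3 * (p'' a) ^ 2)) := by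
    rcases mul_self_eq_one_iff.mp hε2 with h1 | h1 <;>
      rw [hEdef, h1] <;> field_simp <;> ring
  rw [hval] at hGlim0
  have hGlim : Tendsto G (𝓝[>] a)
      (𝓝 (ε * (q' a / p'' a - q a * p''' a / (3 * (p'' a) ^ 2)))) := hGlim0
  refine Tendsto.congr' ?_ hGlim
  have hue : ∀ᶠ x in 𝓝[>] a, u x ∈ Ioo (-(1:ℝ)/2) (1/2) :=
    hu0 (Ioo_mem_nhds (by norm_num) (by norm_num))
  have hve : ∀ᶠ x in 𝓝[>] a, v x ∈ Ioo (-(1:ℝ)/2) (1/2) :=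
    hv0 (Ioo_mem_nhds (by norm_num) (by norm_num))
  filter_upwards [htIoc, hue, hve, self_mem_nhdsWithin] with x hx hux hvx hxa
  have ht : 0 < x - a := sub_pos.mpr hxa
  have hupos : 0 < 1 + u x := by have := hux.1; linarith
  have hvpos : 0 < 1 + v x := by have := hvx.1; linarith
  have hw0 : 0 < w x := Real.sqrt_pos.mpr hupos
  have hw2 : w x ^ 2 = 1 + u x := Real.sq_sqrt hupos.le
  obtain ⟨-, h1⟩ := hc1 x hx
  obtain ⟨-, h2⟩ := hc2 x hx
  obtain ⟨-, h3⟩ := hc3 x hx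
  have key1 : ε * p' x = E * (x - a) * (1 + v x) := by
    have hε0 : ε ≠ 0 := by rintro rfl; norm_num at hε2
    rw [h1, hvdef, hEdef]
    field_simp
  have key2 : ε * (p x - p a) = E * (x - a) ^ 2 / 2 * (1 + u x) := by
    have hε0 : ε ≠ 0 := by rintro rfl; norm_num at hε2
    rw [h2, hudef, hEdef]
    field_simp
  have key3 : Real.sqrt (2 * E) * Real.sqrt (ε * (p x - p a)) = E * (x - a) * w x := by
    rw [key2, ← Real.sqrt_mul (by positivity : (0:ℝ) ≤ 2 * E)]
    have heq : 2 * E * (E * (x - a) ^ 2 / 2 * (1 + u x)) = (E * (x - a)) ^ 2 * (1 + u x) := by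
      ring
    rw [heq, Real.sqrt_mul (sq_nonneg _), Real.sqrt_sq (by positivity : (0:ℝ) ≤ E * (x - a))]
  show G x = _
  rw [hGdef]
  simp only
  rw [h3, key1, key3]
  have hsub1 : 2 * ε * (p''' (c2 x) / 6) / E = (w x ^ 2 - 1) / (x - a) := by
    rw [hw2, hudef]
    field_simp
    ring
  have hsub2 : ε * (p''' (c1 x) / 2) / E = v x / (x - a) := by
    rw [hvdef]
    field_simp
  rw [hsub1, hsub2]
  have hw1' : w x + 1 ≠ 0 := by positivity
  field_simp
  ring
end

section
/- Let α ∈ ℝ with α ≠ 0, let ε = sgn α, and let A > 0, t > 0. Then | ∫_0^A e^{i t α x²} dx − (e^{ε π i/4}/2) √(π/(|α| t)) | ≤ 1/(A |α| t). -/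
open Real MeasureTheory intervalIntegral
open Complex

lemma fresnel_deriv (b : ℂ) (hb : b ≠ 0) (x : ℝ) (hx : x ≠ 0) :
    HasDerivAt (fun y : ℝ => Complex.exp (-b * y^2) / (-2*b*y))
      (Complex.exp (-b * x^2) + Complex.exp (-b * x^2) / (2*b*x^2)) x := by
  have h1 : HasDerivAt (fun z : ℂ => Complex.exp (-b * z^2) / (-2*b*z))
      ((-b*(2*x) * Complex.exp (-b*(x:ℂ)^2) * (-2*b*x) - Complex.exp (-b*(x:ℂ)^2) * (-2*b)) / (-2*b*(x:ℂ))^2) (x:ℝ) := by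
    have hnum : HasDerivAt (fun z : ℂ => Complex.exp (-b * z^2)) (-b*(2*x) * Complex.exp (-b*(x:ℂ)^2)) (x:ℝ) := by
      have : HasDerivAt (fun z : ℂ => -b * z^2) (-b * (2*x)) (x:ℝ) := by
        simpa using ((hasDerivAt_pow 2 (x:ℂ)).const_mul (-b))
      simpa [mul_comm] using this.cexp
    have hden : HasDerivAt (fun z : ℂ => -2*b*z) (-2*b) (x:ℝ) := by
      simpa using (hasDerivAt_id (x:ℂ)).const_mul (-2*b)
    exact hnum.div hden (by simp [hb, hx])
  have h2 := h1.comp_ofReal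
  convert h2 using 1
  have hxc : (x:ℂ) ≠ 0 := Complex.ofReal_ne_zero.mpr hx
  field_simp
  ring

lemma fresnel_ibp (b : ℂ) (hre : 0 ≤ b.re) (β : ℝ) (him : b.im = -β) (hβ : β ≠ 0)
    {A B : ℝ} (hA : 0 < A) (hAB : A ≤ B) :
    ‖∫ x in A..B, Complex.exp (-b * x^2)‖ ≤ 1 / (A * |β|) := by
  have hβpos : 0 < |β| := abs_pos.mpr hβ
  have hb : b ≠ 0 := fun h => hβ (by simpa [h] using him.symm)
  have habs : |β| ≤ ‖b‖ := by
    calc |β| = |b.im| := by rw [him, abs_neg]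
    _ ≤ ‖b‖ := Complex.abs_im_le_norm b
  have hB : 0 < B := lt_of_lt_of_le hA hAB
  have hmem : ∀ x ∈ Set.uIcc A B, x ≠ 0 := by
    intro x hx
    rw [Set.uIcc_of_le hAB] at hx
    exact ne_of_gt (lt_of_lt_of_le hA hx.1)
  -- norm of exp
  have hexp : ∀ x : ℝ, ‖Complex.exp (-b * (x:ℂ)^2)‖ ≤ 1 := by
    intro x
    rw [Complex.norm_exp]
    apply Real.exp_le_one_iff.mpr
    have : (-b * (x:ℂ)^2).re = -b.re * x^2 := by
      simp [Complex.mul_re, ← Complex.ofReal_pow]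
    rw [this]
    nlinarith [sq_nonneg x]
  -- norm of boundary terms
  have hbd : ∀ x : ℝ, 0 < x → ‖Complex.exp (-b * (x:ℂ)^2) / (-2*b*x)‖ ≤ 1/(2 * |β| * x) := by
    intro x hx
    rw [norm_div]
    have hd : ‖(-2*b*(x:ℂ))‖ = 2 * ‖b‖ * x := by
      simp only [norm_mul, norm_neg, RCLike.norm_ofNat,
        Complex.norm_real, Real.norm_eq_abs, abs_of_pos hx]
    rw [hd]
    exact div_le_div₀ (by norm_num) (hexp x) (by positivity) (by nlinarith)
  -- interval integrability of the pieces
  have hcont1 : ContinuousOn (fun x : ℝ => Complex.exp (-b * (x:ℝ)^2)) (Set.uIcc A B) :=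
    (Complex.continuous_exp.comp (by continuity)).continuousOn
  have hcont2 : ContinuousOn (fun x : ℝ => Complex.exp (-b * (x:ℝ)^2) / (2*b*(x:ℝ)^2)) (Set.uIcc A B) := by
    apply ContinuousOn.div
    · exact hcont1
    · exact Continuous.continuousOn (by continuity)
    · intro x hx
      simp [hb, hmem x hx]
  have hint1 : IntervalIntegrable (fun x : ℝ => Complex.exp (-b * (x:ℝ)^2)) volume A B :=
    hcont1.intervalIntegrable
  have hint2 : IntervalIntegrable (fun x : ℝ => Complex.exp (-b * (x:ℝ)^2) / (2*b*(x:ℝ)^2)) volume A B :=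
    hcont2.intervalIntegrable
  -- FTC
  have hftc : (∫ x in A..B, (Complex.exp (-b * (x:ℝ)^2) + Complex.exp (-b * (x:ℝ)^2) / (2*b*(x:ℝ)^2)))
      = Complex.exp (-b * (B:ℂ)^2) / (-2*b*B) - Complex.exp (-b * (A:ℂ)^2) / (-2*b*A) := by
    apply intervalIntegral.integral_eq_sub_of_hasDerivAt
    · intro x hx
      exact fresnel_deriv b hb x (hmem x hx)
    · exact hint1.add hint2
  have hsplit : (∫ x in A..B, Complex.exp (-b * (x:ℝ)^2))
      = (Complex.exp (-b * (B:ℂ)^2) / (-2*b*B) - Complex.exp (-b * (A:ℂ)^2) / (-2*b*A))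
        - ∫ x in A..B, Complex.exp (-b * (x:ℝ)^2) / (2*b*(x:ℝ)^2) := by
    rw [← hftc, intervalIntegral.integral_add hint1 hint2]
    ring
  rw [hsplit]
  -- bound the correction integral
  have hbound2 : ‖∫ x in A..B, Complex.exp (-b * (x:ℝ)^2) / (2*b*(x:ℝ)^2)‖
      ≤ (1/A - 1/B) / (2 * |β|) := by
    have key : ∀ x ∈ Set.Icc A B, ‖Complex.exp (-b * (x:ℝ)^2) / (2*b*(x:ℝ)^2)‖
        ≤ 1 / (2 * |β|) * x^(-2 : ℤ) := by
      intro x hx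
      have hx0 : 0 < x := lt_of_lt_of_le hA hx.1
      rw [norm_div]
      have hd : ‖(2*b*((x:ℂ))^2)‖ = 2 * ‖b‖ * x^2 := by
        simp only [norm_mul, norm_pow, Complex.norm_real, Real.norm_eq_abs,
          abs_of_pos hx0, RCLike.norm_ofNat]
      have habspos : 0 < ‖b‖ := norm_pos_iff.mpr hb
      rw [hd, zpow_neg, div_le_iff₀ (mul_pos (mul_pos two_pos habspos) (by positivity))]
      have : (1 : ℝ) / (2 * |β|) * (x ^ (2:ℤ))⁻¹ * (2 * ‖b‖ * x ^ 2)
          = ‖b‖ / |β| := by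
        rw [zpow_two]
        field_simp
      rw [this]
      calc ‖Complex.exp (-b * (x:ℂ)^2)‖ ≤ 1 := hexp x
      _ ≤ ‖b‖ / |β| := by
            rw [le_div_iff₀ hβpos]; simpa using habs
    calc ‖∫ x in A..B, Complex.exp (-b * (x:ℝ)^2) / (2*b*(x:ℝ)^2)‖
        ≤ ∫ x in A..B, 1 / (2 * |β|) * x^(-2 : ℤ) := by
          have hgint : IntervalIntegrable (fun x : ℝ => 1 / (2 * |β|) * x^(-2 : ℤ)) volume A B := by
            apply IntervalIntegrable.const_mul
            apply intervalIntegral.intervalIntegrable_zpow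
            right
            rw [Set.uIcc_of_le hAB]
            intro h
            exact absurd h.1 (not_le.mpr hA)
          calc ‖∫ x in A..B, Complex.exp (-b * (x:ℝ)^2) / (2*b*(x:ℝ)^2)‖
              ≤ ∫ x in A..B, ‖Complex.exp (-b * (x:ℝ)^2) / (2*b*(x:ℝ)^2)‖ :=
                intervalIntegral.norm_integral_le_integral_norm hAB
          _ ≤ ∫ x in A..B, 1 / (2 * |β|) * x^(-2 : ℤ) :=
                intervalIntegral.integral_mono_on hAB hint2.norm hgint key
    _ = (1/A - 1/B) / (2 * |β|) := by
          rw [intervalIntegral.integral_const_mul, integral_zpow]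
          · norm_num
            field_simp
            ring
          · right
            refine ⟨by norm_num, ?_⟩
            rw [Set.uIcc_of_le hAB]
            intro h
            exact absurd h.1 (not_le.mpr hA)
  calc ‖Complex.exp (-b * (B:ℂ)^2) / (-2*b*B) - Complex.exp (-b * (A:ℂ)^2) / (-2*b*A)
        - ∫ x in A..B, Complex.exp (-b * (x:ℝ)^2) / (2*b*(x:ℝ)^2)‖
      ≤ ‖Complex.exp (-b * (B:ℂ)^2) / (-2*b*B)‖ + ‖Complex.exp (-b * (A:ℂ)^2) / (-2*b*A)‖
        + ‖∫ x in A..B, Complex.exp (-b * (x:ℝ)^2) / (2*b*(x:ℝ)^2)‖ := by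
        apply le_trans (norm_sub_le _ _)
        gcongr
        exact norm_sub_le _ _
  _ ≤ 1/(2 * |β| * B) + 1/(2 * |β| * A) + (1/A - 1/B) / (2 * |β|) :=
        add_le_add (add_le_add (hbd B hB) (hbd A hA)) hbound2
  _ = 1 / (A * |β|) := by
        field_simp
        ring

lemma fresnel_trunc_pos (b : ℂ) (hre : 0 < b.re) (β : ℝ) (him : b.im = -β) (hβ : β ≠ 0)
    {A : ℝ} (hA : 0 < A) :
    ‖(∫ x in (0:ℝ)..A, Complex.exp (-b * x^2)) - ((π:ℂ)/b) ^ (1/2:ℂ) / 2‖ ≤ 1/(A*|β|) := by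
  have hint : Integrable (fun x : ℝ => Complex.exp (-b * (x:ℂ)^2)) := integrable_cexp_neg_mul_sq hre
  have htail : IntegrableOn (fun x : ℝ => Complex.exp (-b * (x:ℂ)^2)) (Set.Ioi A) :=
    hint.integrableOn
  have hsplit : (∫ x in Set.Ioi (0:ℝ), Complex.exp (-b * (x:ℂ)^2))
      = (∫ x in Set.Ioc (0:ℝ) A, Complex.exp (-b * (x:ℂ)^2))
        + ∫ x in Set.Ioi A, Complex.exp (-b * (x:ℂ)^2) := by
    rw [← MeasureTheory.setIntegral_union (Set.Ioc_disjoint_Ioi le_rfl) measurableSet_Ioi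
        hint.integrableOn hint.integrableOn, Set.Ioc_union_Ioi_eq_Ioi hA.le]
  have hgauss := integral_gaussian_complex_Ioi hre
  have heq : (∫ x in (0:ℝ)..A, Complex.exp (-b * x^2)) - ((π:ℂ)/b) ^ (1/2:ℂ) / 2
      = - ∫ x in Set.Ioi A, Complex.exp (-b * (x:ℂ)^2) := by
    rw [intervalIntegral.integral_of_le hA.le, ← hgauss, hsplit]
    ring
  rw [heq, norm_neg]
  -- tail bound via limit of finite-interval bounds
  have htend : Filter.Tendsto (fun B : ℝ => ∫ x in A..B, Complex.exp (-b * (x:ℂ)^2))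
      Filter.atTop (nhds (∫ x in Set.Ioi A, Complex.exp (-b * (x:ℂ)^2))) :=
    intervalIntegral_tendsto_integral_Ioi A htail Filter.tendsto_id
  have := (continuous_norm.tendsto _).comp htend
  apply le_of_tendsto this
  filter_upwards [Filter.eventually_ge_atTop A] with B hB
  exact fresnel_ibp b hre.le β him hβ hA hB

lemma fresnel_const (β : ℝ) (hβ : β ≠ 0) :
    ((π:ℂ) / (-(Complex.I * β))) ^ (1/2:ℂ)
      = Complex.exp ((Real.sign β : ℂ) * π * Complex.I / 4) * (Real.sqrt (π/|β|) : ℂ) := by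
  have hβpos : 0 < |β| := abs_pos.mpr hβ
  have hβc : (β:ℂ) ≠ 0 := Complex.ofReal_ne_zero.mpr hβ
  set ε : ℝ := Real.sign β with hε
  have hεval : ε = 1 ∧ 0 < β ∨ ε = -1 ∧ β < 0 := by
    rcases lt_or_gt_of_ne hβ with h | h
    · exact Or.inr ⟨Real.sign_of_neg h, h⟩
    · exact Or.inl ⟨Real.sign_of_pos h, h⟩
  set r : ℝ := Real.sqrt (π/|β|) with hr
  have hrpos : 0 < r := Real.sqrt_pos.mpr (div_pos Real.pi_pos hβpos)
  have hθ : (ε:ℂ) * π * Complex.I / 4 = ((ε * π / 4 : ℝ) : ℂ) * Complex.I := by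
    push_cast; ring
  set w : ℂ := Complex.exp ((ε:ℂ) * π * Complex.I / 4) * (r:ℂ) with hw
  have hcos : Real.cos (ε * π / 4) = Real.sqrt 2 / 2 := by
    rcases hεval with ⟨h1, _⟩ | ⟨h1, _⟩ <;> rw [h1]
    · norm_num [Real.cos_pi_div_four]
    · rw [show (-1) * π / 4 = -(π/4) by ring, Real.cos_neg, Real.cos_pi_div_four]
  have hwre : 0 < w.re := by
    rw [hw, hθ, Complex.mul_re]
    simp only [Complex.exp_ofReal_mul_I_re, Complex.exp_ofReal_mul_I_im,
      Complex.ofReal_re, Complex.ofReal_im, mul_zero, sub_zero, hcos]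
    positivity
  have hsign : (ε:ℂ) * (β:ℂ) = ((|β|:ℝ):ℂ) := by
    rcases hεval with ⟨h1, h2⟩ | ⟨h1, h2⟩
    · rw [h1, abs_of_pos h2]; push_cast; ring
    · rw [h1, abs_of_neg h2]; push_cast; ring
  have hexpval : Complex.exp ((ε:ℂ) * π * Complex.I / 4) ^ 2 = (ε:ℂ) * Complex.I := by
    rw [sq, ← Complex.exp_add]
    have : (ε:ℂ) * π * Complex.I / 4 + (ε:ℂ) * π * Complex.I / 4 = ((ε * π / 2 : ℝ):ℂ) * Complex.I := by
      push_cast; ring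
    rw [this, Complex.exp_mul_I, ← Complex.ofReal_cos, ← Complex.ofReal_sin]
    rcases hεval with ⟨h1, _⟩ | ⟨h1, _⟩ <;> rw [h1]
    · norm_num [Real.cos_pi_div_two, Real.sin_pi_div_two]
    · rw [show (-1) * π / 2 = -(π/2) by ring, Real.cos_neg, Real.sin_neg]
      norm_num [Real.cos_pi_div_two, Real.sin_pi_div_two]
  have hrsq : (r:ℂ)^2 = (((π/|β|) : ℝ) : ℂ) := by
    rw [← Complex.ofReal_pow, Real.sq_sqrt (by positivity)]
  have hne : -(Complex.I * (β:ℂ)) ≠ 0 := by simp [Complex.I_ne_zero, hβc]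
  have habsne : ((|β|:ℝ):ℂ) ≠ 0 := Complex.ofReal_ne_zero.mpr (ne_of_gt hβpos)
  have hsq : w ^ 2 = (π:ℂ) / (-(Complex.I * β)) := by
    rw [hw, mul_pow, hexpval, hrsq, eq_div_iff hne, Complex.ofReal_div]
    calc (ε:ℂ) * Complex.I * (((π:ℝ):ℂ) / ((|β|:ℝ):ℂ)) * -(Complex.I * β)
        = (Complex.I * Complex.I) * -(((ε:ℂ) * β) * (((π:ℝ):ℂ) / ((|β|:ℝ):ℂ))) := by ring
    _ = ((|β|:ℝ):ℂ) * (((π:ℝ):ℂ) / ((|β|:ℝ):ℂ)) := by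
        rw [Complex.I_mul_I, hsign]; ring
    _ = ((π:ℝ):ℂ) := by field_simp
  rw [show (1/2:ℂ) = (2:ℂ)⁻¹ by norm_num, ← hsq]
  exact Complex.sq_cpow_two_inv hwre

/-- Truncated Fresnel integral estimate: for `α ≠ 0`, `ε = sgn α`, `A > 0` and `t > 0`,
`|∫_0^A e^{itαx²} dx − (e^{επi/4}/2)√(π/(|α|t))| ≤ 1/(A|α|t)`. -/
theorem fresnel_truncation (α : ℝ) (hα : α ≠ 0) (ε : ℝ) (hε : ε = Real.sign α)
    (A t : ℝ) (hA : 0 < A) (ht : 0 < t) :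
    ‖(∫ x in (0:ℝ)..A, Complex.exp (Complex.I * t * α * x^2))
      - Complex.exp (ε * Real.pi * Complex.I / 4) / 2 *
          Complex.ofReal (Real.sqrt (Real.pi / (|α| * t)))‖
    ≤ 1 / (A * |α| * t) := by
  set β : ℝ := t * α with hβdef
  have hβ : β ≠ 0 := mul_ne_zero (ne_of_gt ht) hα
  have hβabs : |β| = |α| * t := by
    rw [hβdef, abs_mul, abs_of_pos ht]; ring
  have hsign : Real.sign β = Real.sign α := by
    rcases lt_or_gt_of_ne hα with h | h
    · rw [Real.sign_of_neg h, Real.sign_of_neg (by rw [hβdef]; exact mul_neg_of_pos_of_neg ht h)]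
    · rw [Real.sign_of_pos h, Real.sign_of_pos (by rw [hβdef]; positivity)]
  set l : Filter ℝ := nhdsWithin 0 (Set.Ioi 0) with hl
  have hlne : l.NeBot := nhdsGT_neBot 0
  -- the limiting statements
  set F : ℝ → ℂ := fun δ => ∫ x in (0:ℝ)..A, Complex.exp (-(((δ:ℂ) - Complex.I * β)) * x^2) with hF
  set G : ℝ → ℂ := fun δ => ((π:ℂ)/((δ:ℂ) - Complex.I * β)) ^ (1/2:ℂ) / 2 with hG
  have him : ∀ δ : ℝ, ((δ:ℂ) - Complex.I * β).im = -β := by intro δ; simp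
  have hre : ∀ δ : ℝ, ((δ:ℂ) - Complex.I * β).re = δ := by intro δ; simp
  have hbound : ∀ᶠ δ in l, ‖F δ - G δ‖ ≤ 1/(A*|β|) := by
    filter_upwards [self_mem_nhdsWithin] with δ (hδ : 0 < δ)
    exact fresnel_trunc_pos _ (by rw [hre]; exact hδ) β (him δ) hβ hA
  -- tendsto of F
  have hFtend : Filter.Tendsto F l
      (nhds (∫ x in (0:ℝ)..A, Complex.exp (Complex.I * t * α * x^2))) := by
    apply intervalIntegral.tendsto_integral_filter_of_dominated_convergence (fun _ => (1:ℝ))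
    · filter_upwards with δ
      apply Continuous.aestronglyMeasurable
      exact Complex.continuous_exp.comp (by continuity)
    · filter_upwards [self_mem_nhdsWithin] with δ (hδ : 0 < δ)
      filter_upwards with x _
      rw [Complex.norm_exp]
      apply Real.exp_le_one_iff.mpr
      have : (-(((δ:ℂ) - Complex.I * β)) * (x:ℂ)^2).re = -δ * x^2 := by
        simp [Complex.mul_re, ← Complex.ofReal_pow, hre, him]
      rw [this]
      nlinarith [sq_nonneg x]
    · exact intervalIntegrable_const
    · filter_upwards with x _
      have hcont : Continuous (fun δ : ℝ => Complex.exp (-(((δ:ℂ) - Complex.I * β)) * x^2)) :=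
        Complex.continuous_exp.comp (by continuity)
      have hle : l ≤ nhds (0:ℝ) := nhdsWithin_le_nhds
      have hx : Complex.I * (t:ℂ) * (α:ℂ) * (x:ℂ)^2
          = -((((0:ℝ):ℂ) - Complex.I * (β:ℂ))) * (x:ℂ)^2 := by
        rw [hβdef]
        push_cast
        ring
      rw [hx]
      exact (hcont.tendsto 0).mono_left hle
  -- tendsto of G
  have hGtend : Filter.Tendsto G l
      (nhds (((π:ℂ)/(-(Complex.I * β))) ^ (1/2:ℂ) / 2)) := by
    have hcont0 : Continuous (fun δ : ℝ => (δ:ℂ) - Complex.I * β) :=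
      Complex.continuous_ofReal.sub continuous_const
    have hne0 : ((0:ℝ):ℂ) - Complex.I * β ≠ 0 := by
      intro h
      have := congrArg Complex.im h
      simp [hβ] at this
    have himne : ((π:ℂ)/(((0:ℝ):ℂ) - Complex.I * β)).im ≠ 0 := by
      have heq : ((π:ℂ)/(((0:ℝ):ℂ) - Complex.I * β)) = ((π/β : ℝ):ℂ) * Complex.I := by
        have hβc : (β:ℂ) ≠ 0 := Complex.ofReal_ne_zero.mpr hβ
        have hI : Complex.I * Complex.I = -1 := Complex.I_mul_I
        rw [div_eq_iff hne0]
        push_cast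
        field_simp
        linear_combination (β:ℂ) * Complex.I_sq
      rw [heq]
      simp [Complex.mul_im, div_ne_zero Real.pi_ne_zero hβ]
    have hcpow : ContinuousAt (fun z : ℂ => z ^ (1/2:ℂ))
        ((π:ℂ)/(((0:ℝ):ℂ) - Complex.I * β)) :=
      continuousAt_cpow_const (Or.inr himne)
    have hdiv : ContinuousAt (fun z : ℂ => (π:ℂ)/z) (((0:ℝ):ℂ) - Complex.I * β) :=
      continuousAt_const.div continuousAt_id hne0
    have h1 : ContinuousAt (fun z : ℂ => ((π:ℂ)/z) ^ (1/2:ℂ) / 2) (((0:ℝ):ℂ) - Complex.I * β) :=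
      (hcpow.comp hdiv).div_const 2
    have hle : l ≤ nhds (0:ℝ) := nhdsWithin_le_nhds
    have h2 : Filter.Tendsto (fun δ : ℝ => ((π:ℂ)/((δ:ℂ) - Complex.I*β)) ^ (1/2:ℂ) / 2) l
        (nhds (((π:ℂ)/(((0:ℝ):ℂ) - Complex.I*β)) ^ (1/2:ℂ) / 2)) :=
      h1.tendsto.comp ((hcont0.tendsto 0).mono_left hle)
    rw [show ((0:ℝ):ℂ) - Complex.I * (β:ℂ) = -(Complex.I * β) by simp] at h2
    exact h2
  have hnorm : Filter.Tendsto (fun δ => ‖F δ - G δ‖) l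
      (nhds ‖(∫ x in (0:ℝ)..A, Complex.exp (Complex.I * t * α * x^2))
        - ((π:ℂ)/(-(Complex.I * β))) ^ (1/2:ℂ) / 2‖) :=
    (hFtend.sub hGtend).norm
  have hfinal := le_of_tendsto hnorm hbound
  rw [fresnel_const β hβ] at hfinal
  have hconst : Complex.exp ((Real.sign β : ℂ) * π * Complex.I / 4) * ((Real.sqrt (π/|β|) : ℝ):ℂ) / 2
      = Complex.exp ((ε:ℝ) * Real.pi * Complex.I / 4) / 2 * ((Real.sqrt (π/(|α| * t)) : ℝ):ℂ) := by
    rw [hsign, ← hε, hβabs]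
    ring
  rw [hconst] at hfinal
  calc ‖(∫ x in (0:ℝ)..A, Complex.exp (Complex.I * t * α * x^2))
      - Complex.exp ((ε:ℝ) * Real.pi * Complex.I / 4) / 2 * ((Real.sqrt (π/(|α| * t)) : ℝ):ℂ)‖
      ≤ 1/(A*|β|) := hfinal
  _ = 1 / (A * |α| * t) := by rw [hβabs]; ring_nf
end
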